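/- arXiv:2112.11835 — 4 statements merged into one kernel-verified Lean document; each statement's English description precedes it below -/
import Mathlib

section
/- Let Ω ⊂ ℝ² be a bounded open set, let ε > 0, α > 0, and let a, b : Ω → ℝ satisfy a(x,y) ≥ α and b(x,y) ≥ 0 on Ω. Let m_x and M_x be the infimum and supremum of the first coordinate over Ω. Suppose z is continuous on the closure of Ω, twice differentiable on Ω, and satisfies −εΔz + a·(∂z/∂x) + b·z = p on Ω and z = q on ∂Ω, where p : Ω → ℝ is bounded and q : ∂Ω → ℝ. Then sup over the closure of Ω of |z| is at most sup_{∂Ω} |q| + ((M_x − m_x)/α)·sup_Ω |p|. -/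
/-- Partial derivative with respect to the first (x) coordinate. -/
noncomputable def pderivX (f : ℝ × ℝ → ℝ) (p : ℝ × ℝ) : ℝ :=
  deriv (fun s => f (s, p.2)) p.1

/-- Second partial derivative with respect to the first (x) coordinate. -/
noncomputable def pderivXX (f : ℝ × ℝ → ℝ) (p : ℝ × ℝ) : ℝ :=
  deriv (fun s => deriv (fun s' => f (s', p.2)) s) p.1

/-- Second partial derivative with respect to the second (y) coordinate. -/
noncomputable def pderivYY (f : ℝ × ℝ → ℝ) (p : ℝ × ℝ) : ℝ :=
  deriv (fun s => deriv (fun s' => f (p.1, s')) s) p.2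

/-- The convection-diffusion operator `L z = -ε Δz + a z_x + b z`. -/
noncomputable def Lop (ε : ℝ) (a b : ℝ × ℝ → ℝ) (z : ℝ × ℝ → ℝ) (p : ℝ × ℝ) : ℝ :=
  -ε * (pderivXX z p + pderivYY z p) + a p * pderivX z p + b p * z p

section Aux
open Filter Topology Set

lemma secondDerivTestMin (f : ℝ → ℝ) (x0 : ℝ)
    (hf : ∀ᶠ s in 𝓝 x0, DifferentiableAt ℝ f s)
    (hmin : IsLocalMin f x0)
    (hf' : DifferentiableAt ℝ (deriv f) x0) :
    0 ≤ deriv (deriv f) x0 := by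
  by_contra hneg
  push_neg at hneg
  have h0 : deriv f x0 = 0 := hmin.deriv_eq_zero
  have hslope : Tendsto (slope (deriv f) x0) (𝓝[≠] x0) (𝓝 (deriv (deriv f) x0)) :=
    hasDerivAt_iff_tendsto_slope.1 hf'.hasDerivAt
  have hev : ∀ᶠ s in 𝓝[≠] x0, slope (deriv f) x0 s < 0 :=
    hslope.eventually_lt_const hneg
  have hev' : ∀ᶠ s in 𝓝[>] x0, deriv f s < 0 := by
    filter_upwards [nhdsWithin_mono x0 (fun s hs => ne_of_gt hs : Ioi x0 ⊆ {x0}ᶜ) hev,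
      self_mem_nhdsWithin] with s hs hs'
    have hpos : 0 < s - x0 := sub_pos.2 hs'
    rw [slope_def_field, h0, sub_zero] at hs
    by_contra hc
    push_neg at hc
    exact absurd hs (not_lt.2 (div_nonneg hc hpos.le))
  -- extract intervals
  obtain ⟨u, hu, hIoo⟩ := mem_nhdsGT_iff_exists_Ioo_subset.1 hev'
  obtain ⟨e, he, hball⟩ := Metric.eventually_nhds_iff.1 (hf.and (hmin : ∀ᶠ x in 𝓝 x0, f x0 ≤ f x))
  set t := min ((x0 + u) / 2) (x0 + e / 2) with ht
  have hx0t : x0 < t := by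
    apply lt_min
    · linarith [hu.out]
    · linarith
  have htu : t < u := by
    have : t ≤ (x0 + u) / 2 := min_le_left _ _
    have := hu.out; linarith
  have hsub : Icc x0 t ⊆ Metric.ball x0 e := by
    intro s hs
    have h1 : s ≤ t := hs.2
    have h2 : x0 ≤ s := hs.1
    have ht2 : t ≤ x0 + e / 2 := min_le_right _ _
    simp only [Metric.mem_ball, Real.dist_eq, abs_lt]
    constructor <;> linarith
  have hdiffIcc : ∀ s ∈ Icc x0 t, DifferentiableAt ℝ f s := by
    intro s hs
    have hmem := hsub hs
    rw [Metric.mem_ball] at hmem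
    exact (hball hmem).1
  have hanti : StrictAntiOn f (Icc x0 t) := by
    apply strictAntiOn_of_deriv_neg (convex_Icc _ _)
    · exact fun s hs => (hdiffIcc s hs).continuousAt.continuousWithinAt
    · intro s hs
      rw [interior_Icc] at hs
      exact hIoo ⟨hs.1, lt_trans hs.2 htu⟩
  have hlt : f t < f x0 := hanti (left_mem_Icc.2 hx0t.le) (right_mem_Icc.2 hx0t.le) hx0t
  have hge : f x0 ≤ f t := by
    have hmem := hsub (right_mem_Icc.2 hx0t.le)
    rw [Metric.mem_ball] at hmem
    exact (hball hmem).2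
  linarith

lemma sliceX {Ω : Set (ℝ×ℝ)} (hΩo : IsOpen Ω) {z : ℝ×ℝ→ℝ}
    (hz : ∀ q ∈ Ω, DifferentiableAt ℝ z q) {p : ℝ×ℝ} (hp : p ∈ Ω)
    (hz2 : DifferentiableAt ℝ (fderiv ℝ z) p) :
    (∀ᶠ s in 𝓝 p.1, DifferentiableAt ℝ (fun s' => z (s', p.2)) s) ∧
    DifferentiableAt ℝ (deriv (fun s' => z (s', p.2))) p.1 := by
  have hU : {s : ℝ | (s, p.2) ∈ Ω} ∈ 𝓝 p.1 := by
    have : Continuous (fun s : ℝ => (s, p.2)) := continuous_id.prodMk continuous_const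
    exact (hΩo.preimage this).mem_nhds (by simpa using hp)
  have hkey : ∀ s, (s, p.2) ∈ Ω →
      HasDerivAt (fun s' => z (s', p.2)) (fderiv ℝ z (s, p.2) (1, 0)) s := by
    intro s hs
    have hι : HasDerivAt (fun s' : ℝ => (s', p.2)) ((1:ℝ), (0:ℝ)) s :=
      (hasDerivAt_id s).prodMk (hasDerivAt_const s p.2)
    exact ((hz _ hs).hasFDerivAt.comp_hasDerivAt s hι)
  have hev : ∀ᶠ s in 𝓝 p.1, DifferentiableAt ℝ (fun s' => z (s', p.2)) s := by
    filter_upwards [hU] with s hs using (hkey s hs).differentiableAt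
  refine ⟨hev, ?_⟩
  have heq : deriv (fun s' => z (s', p.2)) =ᶠ[𝓝 p.1]
      fun s => fderiv ℝ z (s, p.2) (1, 0) := by
    filter_upwards [hU] with s hs using (hkey s hs).deriv
  have hg : DifferentiableAt ℝ (fun s => fderiv ℝ z (s, p.2) (1, 0)) p.1 := by
    have hι : DifferentiableAt ℝ (fun s : ℝ => (s, p.2)) p.1 :=
      differentiableAt_id.prodMk (differentiableAt_const _)
    have h1 : DifferentiableAt ℝ (fun s : ℝ => fderiv ℝ z (s, p.2)) p.1 := by
      have := hz2.comp p.1 hι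
      exact this
    exact ((ContinuousLinearMap.apply ℝ ℝ ((1:ℝ), (0:ℝ))).differentiable.differentiableAt).comp p.1 h1
  exact hg.congr_of_eventuallyEq heq

lemma sliceY {Ω : Set (ℝ×ℝ)} (hΩo : IsOpen Ω) {z : ℝ×ℝ→ℝ}
    (hz : ∀ q ∈ Ω, DifferentiableAt ℝ z q) {p : ℝ×ℝ} (hp : p ∈ Ω)
    (hz2 : DifferentiableAt ℝ (fderiv ℝ z) p) :
    (∀ᶠ t in 𝓝 p.2, DifferentiableAt ℝ (fun t' => z (p.1, t')) t) ∧
    DifferentiableAt ℝ (deriv (fun t' => z (p.1, t'))) p.2 := by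
  have hU : {t : ℝ | (p.1, t) ∈ Ω} ∈ 𝓝 p.2 := by
    have : Continuous (fun t : ℝ => (p.1, t)) := continuous_const.prodMk continuous_id
    exact (hΩo.preimage this).mem_nhds (by simpa using hp)
  have hkey : ∀ t, (p.1, t) ∈ Ω →
      HasDerivAt (fun t' => z (p.1, t')) (fderiv ℝ z (p.1, t) (0, 1)) t := by
    intro t ht
    have hι : HasDerivAt (fun t' : ℝ => (p.1, t')) ((0:ℝ), (1:ℝ)) t :=
      (hasDerivAt_const t p.1).prodMk (hasDerivAt_id t)
    exact ((hz _ ht).hasFDerivAt.comp_hasDerivAt t hι)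
  have hev : ∀ᶠ t in 𝓝 p.2, DifferentiableAt ℝ (fun t' => z (p.1, t')) t := by
    filter_upwards [hU] with t ht using (hkey t ht).differentiableAt
  refine ⟨hev, ?_⟩
  have heq : deriv (fun t' => z (p.1, t')) =ᶠ[𝓝 p.2]
      fun t => fderiv ℝ z (p.1, t) (0, 1) := by
    filter_upwards [hU] with t ht using (hkey t ht).deriv
  have hg : DifferentiableAt ℝ (fun t => fderiv ℝ z (p.1, t) (0, 1)) p.2 := by
    have hι : DifferentiableAt ℝ (fun t : ℝ => (p.1, t)) p.2 :=
      (differentiableAt_const _).prodMk differentiableAt_id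
    have h1 : DifferentiableAt ℝ (fun t : ℝ => fderiv ℝ z (p.1, t)) p.2 := by
      have := hz2.comp p.2 hι
      exact this
    exact ((ContinuousLinearMap.apply ℝ ℝ ((0:ℝ), (1:ℝ))).differentiable.differentiableAt).comp p.2 h1
  exact hg.congr_of_eventuallyEq heq

lemma keycalc {Ω : Set (ℝ×ℝ)} (hΩo : IsOpen Ω) {z : ℝ×ℝ→ℝ}
    (hz : ∀ q ∈ Ω, DifferentiableAt ℝ z q) {p0 : ℝ×ℝ} (hp0 : p0 ∈ Ω)
    (hz2 : DifferentiableAt ℝ (fderiv ℝ z) p0)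
    (KQ c mx σ δ γ : ℝ) (u : ℝ×ℝ → ℝ)
    (hu : u = fun pt : ℝ×ℝ => KQ + c*(pt.1 - mx) + σ * z pt + δ * Real.exp (γ * pt.1)) :
    pderivX u p0 = c + σ * pderivX z p0 + δ * (Real.exp (γ * p0.1) * γ) ∧
    pderivXX u p0 = σ * pderivXX z p0 + δ * (Real.exp (γ * p0.1) * γ * γ) ∧
    pderivYY u p0 = σ * pderivYY z p0 ∧
    (IsLocalMin u p0 → pderivX u p0 = 0 ∧ 0 ≤ pderivXX u p0 ∧ 0 ≤ pderivYY u p0) := by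
  subst hu
  set E := Real.exp (γ * p0.1) with hE
  -- x-slice facts for z
  obtain ⟨hxev, hxd2⟩ := sliceX hΩo hz hp0 hz2
  obtain ⟨hyev, hyd2⟩ := sliceY hΩo hz hp0 hz2
  -- exp slice derivative
  have hexp : ∀ s : ℝ, HasDerivAt (fun s' => Real.exp (γ * s')) (Real.exp (γ * s) * γ) s := by
    intro s
    have hlin : HasDerivAt (fun s' : ℝ => γ * s') γ s := by
      simpa using (hasDerivAt_id s).const_mul γ
    exact hlin.exp
  -- the full x-slice of u has a derivative at every good point
  have hXslice : ∀ s : ℝ, DifferentiableAt ℝ (fun s' => z (s', p0.2)) s →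
      HasDerivAt (fun s' => KQ + c*(s' - mx) + σ * z (s', p0.2) + δ * Real.exp (γ * s'))
        (c + σ * deriv (fun s' => z (s', p0.2)) s + δ * (Real.exp (γ * s) * γ)) s := by
    intro s hdz
    have h1 : HasDerivAt (fun s' : ℝ => KQ + c*(s' - mx)) c s := by
      simpa using ((hasDerivAt_id s).sub_const mx).const_mul c |>.const_add KQ
    exact (h1.add (hdz.hasDerivAt.const_mul σ)).add ((hexp s).const_mul δ)
  -- (1) pderivX
  have h1 : pderivX (fun pt : ℝ×ℝ => KQ + c*(pt.1 - mx) + σ * z pt + δ * Real.exp (γ * pt.1)) p0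
      = c + σ * pderivX z p0 + δ * (E * γ) := by
    have := (hXslice p0.1 hxev.self_of_nhds).deriv
    simpa [pderivX] using this
  -- eventual identity for deriv of x-slice of u
  have hXev : (deriv (fun s' => KQ + c*(s' - mx) + σ * z (s', p0.2) + δ * Real.exp (γ * s')))
      =ᶠ[𝓝 p0.1] fun s => c + σ * deriv (fun s' => z (s', p0.2)) s + δ * (Real.exp (γ * s) * γ) := by
    filter_upwards [hxev] with s hs using (hXslice s hs).deriv
  have hG : HasDerivAt (fun s => c + σ * deriv (fun s' => z (s', p0.2)) s + δ * (Real.exp (γ * s) * γ))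
      (σ * deriv (deriv (fun s' => z (s', p0.2))) p0.1 + δ * (E * γ * γ)) p0.1 := by
    have h2 : HasDerivAt (fun s => δ * (Real.exp (γ * s) * γ)) (δ * (E * γ * γ)) p0.1 := by
      exact (((hexp p0.1).mul_const γ).const_mul δ).congr_deriv (by ring)
    exact (((hxd2.hasDerivAt.const_mul σ).const_add c).add h2)
  -- (2) pderivXX
  have h2 : pderivXX (fun pt : ℝ×ℝ => KQ + c*(pt.1 - mx) + σ * z pt + δ * Real.exp (γ * pt.1)) p0
      = σ * pderivXX z p0 + δ * (E * γ * γ) := by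
    have heq := hXev.deriv_eq
    simp only [pderivXX]
    rw [heq, hG.deriv]
  -- y-slice of u
  have hYslice : ∀ t : ℝ, DifferentiableAt ℝ (fun t' => z (p0.1, t')) t →
      HasDerivAt (fun t' => KQ + c*(p0.1 - mx) + σ * z (p0.1, t') + δ * Real.exp (γ * p0.1))
        (σ * deriv (fun t' => z (p0.1, t')) t) t := by
    intro t hdz
    simpa using ((hdz.hasDerivAt.const_mul σ).const_add (KQ + c*(p0.1 - mx))).add_const
      (δ * Real.exp (γ * p0.1))
  have hYev : (deriv (fun t' => KQ + c*(p0.1 - mx) + σ * z (p0.1, t') + δ * Real.exp (γ * p0.1)))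
      =ᶠ[𝓝 p0.2] fun t => σ * deriv (fun t' => z (p0.1, t')) t := by
    filter_upwards [hyev] with t ht using (hYslice t ht).deriv
  have hH : HasDerivAt (fun t => σ * deriv (fun t' => z (p0.1, t')) t)
      (σ * deriv (deriv (fun t' => z (p0.1, t'))) p0.2) p0.2 := hyd2.hasDerivAt.const_mul σ
  have h3 : pderivYY (fun pt : ℝ×ℝ => KQ + c*(pt.1 - mx) + σ * z pt + δ * Real.exp (γ * pt.1)) p0
      = σ * pderivYY z p0 := by
    have heq := hYev.deriv_eq
    simp only [pderivYY]
    rw [heq, hH.deriv]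
  refine ⟨h1, h2, h3, ?_⟩
  intro hmin
  set u := fun pt : ℝ×ℝ => KQ + c*(pt.1 - mx) + σ * z pt + δ * Real.exp (γ * pt.1) with hu
  -- local minima along slices
  have hminX : IsLocalMin (fun s => u (s, p0.2)) p0.1 := by
    have h : IsLocalMin u ((fun s : ℝ => (s, p0.2)) p0.1) := by simpa using hmin
    exact IsLocalMin.comp_continuous (g := fun s : ℝ => (s, p0.2)) h
      ((continuous_id.prodMk continuous_const).continuousAt)
  have hminY : IsLocalMin (fun t => u (p0.1, t)) p0.2 := by
    have h : IsLocalMin u ((fun t : ℝ => (p0.1, t)) p0.2) := by simpa using hmin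
    exact IsLocalMin.comp_continuous (g := fun t : ℝ => (p0.1, t)) h
      ((continuous_const.prodMk continuous_id).continuousAt)
  refine ⟨?_, ?_, ?_⟩
  · simpa [pderivX] using hminX.deriv_eq_zero
  · -- second derivative test in x
    rw [show pderivXX u p0 = deriv (deriv (fun s => u (s, p0.2))) p0.1 from rfl]
    apply secondDerivTestMin
    · filter_upwards [hxev] with s hs using (hXslice s hs).differentiableAt
    · exact hminX
    · have : DifferentiableAt ℝ
          (fun s => c + σ * deriv (fun s' => z (s', p0.2)) s + δ * (Real.exp (γ * s) * γ)) p0.1 :=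
        hG.differentiableAt
      exact this.congr_of_eventuallyEq hXev
  · rw [show pderivYY u p0 = deriv (deriv (fun t => u (p0.1, t))) p0.2 from rfl]
    apply secondDerivTestMin
    · filter_upwards [hyev] with t ht using (hYslice t ht).differentiableAt
    · exact hminY
    · exact hH.differentiableAt.congr_of_eventuallyEq hYev

/-- Zeroth order stability bound:
`sup_{cl Ω} |z| ≤ sup_{∂Ω} |q| + ((M_x - m_x)/α) · sup_Ω |p|`. -/
theorem stmt1 (Ω : Set (ℝ × ℝ)) (hΩo : IsOpen Ω) (hΩb : Bornology.IsBounded Ω)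
    (ε α : ℝ) (hε : 0 < ε) (hα : 0 < α)
    (a b : ℝ × ℝ → ℝ)
    (ha : ∀ p ∈ Ω, α ≤ a p) (hb : ∀ p ∈ Ω, 0 ≤ b p)
    (z P Q : ℝ × ℝ → ℝ)
    (hzc : ContinuousOn z (closure Ω))
    (hz2 : ∀ p ∈ Ω, DifferentiableAt ℝ z p ∧ DifferentiableAt ℝ (fderiv ℝ z) p)
    (hPbdd : BddAbove ((fun pt => |P pt|) '' Ω))
    (heq : ∀ p ∈ Ω, Lop ε a b z p = P p)
    (hbd : ∀ p ∈ frontier Ω, z p = Q p) :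
    ∀ pt ∈ closure Ω,
      |z pt| ≤ sSup ((fun x => |Q x|) '' frontier Ω) +
        ((sSup (Prod.fst '' Ω) - sInf (Prod.fst '' Ω)) / α) *
          sSup ((fun x => |P x|) '' Ω) := by
  intro pt hpt
  have hne : Ω.Nonempty := by
    rcases eq_empty_or_nonempty Ω with h | h
    · rw [h] at hpt; simp at hpt
    · exact h
  set KP := sSup ((fun x => |P x|) '' Ω) with hKPdef
  set KQ := sSup ((fun x => |Q x|) '' frontier Ω) with hKQdef
  set Mx := sSup (Prod.fst '' Ω) with hMxdef
  set mx := sInf (Prod.fst '' Ω) with hmxdef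
  set c := KP / α with hcdef
  set γ := α / (2 * ε) with hγdef
  have hγpos : 0 < γ := div_pos hα (by linarith)
  -- bounds on P
  have hKP_ge : ∀ q ∈ Ω, |P q| ≤ KP := fun q hq => le_csSup hPbdd ⟨q, hq, rfl⟩
  have hKP0 : 0 ≤ KP := le_trans (abs_nonneg _) (hKP_ge _ hne.choose_spec)
  have hc0 : 0 ≤ c := div_nonneg hKP0 hα.le
  -- boundedness of the first coordinate
  have hfstB : Bornology.IsBounded (Prod.fst '' Ω) := LipschitzWith.prod_fst.isBounded_image hΩb
  have hbdA : BddAbove (Prod.fst '' Ω) := hfstB.bddAbove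
  have hbdB : BddBelow (Prod.fst '' Ω) := hfstB.bddBelow
  have hclosure_x : ∀ q ∈ closure Ω, mx ≤ q.1 ∧ q.1 ≤ Mx := by
    intro q hq
    have h1 : closure Ω ⊆ Prod.fst ⁻¹' (Icc mx Mx) := by
      apply closure_minimal
      · intro r hr
        exact ⟨csInf_le hbdB ⟨r, hr, rfl⟩, le_csSup hbdA ⟨r, hr, rfl⟩⟩
      · exact (isClosed_Icc).preimage continuous_fst
    exact ⟨(h1 hq).1, (h1 hq).2⟩
  -- compactness
  have hK : IsCompact (closure Ω) := hΩb.isCompact_closure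
  have hfrC : IsCompact (frontier Ω) :=
    hK.of_isClosed_subset isClosed_frontier frontier_subset_closure
  -- bound on Q
  have hQimg : (fun x => |Q x|) '' frontier Ω = (fun x => |z x|) '' frontier Ω := by
    apply image_congr
    intro q hq
    rw [hbd q hq]
  have hQbdd : BddAbove ((fun x => |Q x|) '' frontier Ω) := by
    rw [hQimg]
    exact hfrC.bddAbove_image ((hzc.mono frontier_subset_closure).abs)
  have hKQ_ge : ∀ q ∈ frontier Ω, |Q q| ≤ KQ := fun q hq => le_csSup hQbdd ⟨q, hq, rfl⟩
  -- frontier is nonempty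
  have hfrne : (frontier Ω).Nonempty := by
    rcases eq_empty_or_nonempty (frontier Ω) with h | h
    · exfalso
      have hclopen : IsClopen Ω := isClopen_iff_frontier_eq_empty.2 h
      rcases isClopen_iff.1 hclopen with h1 | h1
      · exact hne.ne_empty h1
      · obtain ⟨R, hR⟩ := hΩb.exists_norm_le
        have := hR (|R| + 1, 0) (h1 ▸ mem_univ _)
        have h2 : |R| + 1 ≤ ‖((|R| + 1 : ℝ), (0:ℝ))‖ := by
          have := norm_fst_le ((|R| + 1 : ℝ), (0:ℝ))
          simpa [abs_of_nonneg (by positivity : (0:ℝ) ≤ |R| + 1)] using this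
        have h3 : R ≤ |R| := le_abs_self R
        linarith
    · exact h
  have hKQ0 : 0 ≤ KQ :=
    le_trans (abs_nonneg _) (hKQ_ge _ hfrne.choose_spec)
  -- The key claim
  have claim : ∀ σ : ℝ, (σ = 1 ∨ σ = -1) → ∀ δ : ℝ, 0 < δ → ∀ q ∈ closure Ω,
      0 ≤ KQ + c * (q.1 - mx) + σ * z q + δ * Real.exp (γ * q.1) := by
    intro σ hσ δ hδ
    set u := fun pt0 : ℝ×ℝ => KQ + c * (pt0.1 - mx) + σ * z pt0 + δ * Real.exp (γ * pt0.1)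
      with hudef
    have hucont : ContinuousOn u (closure Ω) := by
      apply ContinuousOn.add
      apply ContinuousOn.add
      apply ContinuousOn.add
      · exact continuousOn_const
      · exact (continuous_const.mul ((continuous_fst).sub continuous_const)).continuousOn
      · exact continuousOn_const.mul hzc
      · exact (continuous_const.mul
          (Real.continuous_exp.comp (continuous_const.mul continuous_fst))).continuousOn
    obtain ⟨p0, hp0mem, hp0min⟩ := hK.exists_isMinOn
      (hne.mono subset_closure) hucont
    suffices h0 : 0 ≤ u p0 by
      intro q hq
      exact le_trans h0 (hp0min hq)
    rcases ((closure_eq_self_union_frontier Ω) ▸ hp0mem : p0 ∈ Ω ∪ frontier Ω) with hp0Ω | hp0F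
    · -- interior case
      by_contra hcon
      push_neg at hcon
      have hmin' : IsLocalMin u p0 :=
        hp0min.isLocalMin (Filter.mem_of_superset (hΩo.mem_nhds hp0Ω) subset_closure)
      obtain ⟨e1, e2, e3, hmin3⟩ := keycalc hΩo (fun q hq => (hz2 q hq).1) hp0Ω
        (hz2 p0 hp0Ω).2 KQ c mx σ δ γ u hudef
      obtain ⟨hx0, hxx, hyy⟩ := hmin3 hmin'
      set E := Real.exp (γ * p0.1) with hEdef
      have hEpos : 0 < E := Real.exp_pos _
      have hLz : -ε * (pderivXX z p0 + pderivYY z p0) + a p0 * pderivX z p0 + b p0 * z p0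
          = P p0 := heq p0 hp0Ω
      have hA : α ≤ a p0 := ha p0 hp0Ω
      have hB : 0 ≤ b p0 := hb p0 hp0Ω
      have hσP : -KP ≤ σ * P p0 := by
        have h1 : |σ * P p0| ≤ KP := by
          rcases hσ with rfl | rfl <;> simpa [abs_mul] using hKP_ge p0 hp0Ω
        linarith [neg_abs_le (σ * P p0)]
      -- from hx0 and e1 : σ * Zx = -c - δ * (E * γ)
      have hZx : σ * pderivX z p0 = -c - δ * (E * γ) := by
        rw [e1] at hx0; linarith
      have hZxx : -(δ * (E * γ * γ)) ≤ σ * pderivXX z p0 := by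
        rw [e2] at hxx; linarith
      have hZyy : 0 ≤ σ * pderivYY z p0 := by
        rw [e3] at hyy; linarith
      have hup0 : u p0 = KQ + c * (p0.1 - mx) + σ * z p0 + δ * E := rfl
      have hW0 : 0 ≤ KQ + c * (p0.1 - mx) + δ * E := by
        have := (hclosure_x p0 (subset_closure hp0Ω)).1
        have h1 : 0 ≤ c * (p0.1 - mx) := mul_nonneg hc0 (by linarith)
        linarith [mul_pos hδ hEpos]
      -- multiply the PDE by σ
      have hLzσ : -ε * (σ * pderivXX z p0 + σ * pderivYY z p0) + a p0 * (σ * pderivX z p0)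
          + b p0 * (σ * z p0) = σ * P p0 := by
        rcases hσ with rfl | rfl
        · rw [← hLz]; ring
        · rw [← hLz]; ring
      have t1 : a p0 * (σ * pderivX z p0) = -(a p0 * c) - a p0 * (δ * (E * γ)) := by
        rw [hZx]; ring
      have t2 : ε * (-(δ * (E * γ * γ))) ≤ ε * (σ * pderivXX z p0) :=
        mul_le_mul_of_nonneg_left hZxx hε.le
      have t3 : 0 ≤ ε * (σ * pderivYY z p0) := mul_nonneg hε.le hZyy
      have hz0 : σ * z p0 = u p0 - (KQ + c * (p0.1 - mx) + δ * E) := by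
        rw [hup0]; ring
      have t4 : b p0 * (σ * z p0)
          = b p0 * (u p0) - b p0 * (KQ + c * (p0.1 - mx) + δ * E) := by
        rw [hz0]; ring
      have t5a : b p0 * (u p0) ≤ 0 := mul_nonpos_iff.2 (Or.inl ⟨hB, hcon.le⟩)
      have t5b : 0 ≤ b p0 * (KQ + c * (p0.1 - mx) + δ * E) := mul_nonneg hB hW0
      have t6 : α * c ≤ a p0 * c := mul_le_mul_of_nonneg_right hA hc0
      have t7 : α * (δ * (E * γ)) ≤ a p0 * (δ * (E * γ)) :=
        mul_le_mul_of_nonneg_right hA (by positivity)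
      have t8 : ε * γ = α / 2 := by
        rw [hγdef]; field_simp
      have t9 : ε * (δ * (E * γ * γ)) = (α / 2) * (δ * (E * γ)) := by
        rw [← t8]; ring
      have hαc : α * c = KP := by
        rw [hcdef]; field_simp
      have hppos : 0 < δ * (E * γ) := by positivity
      have hfin : 0 < α * (δ * (E * γ)) := mul_pos hα hppos
      linarith
    · -- frontier case
      have hzq : z p0 = Q p0 := hbd p0 hp0F
      have h1 : |Q p0| ≤ KQ := hKQ_ge p0 hp0F
      have h2 : 0 ≤ c * (p0.1 - mx) :=
        mul_nonneg hc0 (by linarith [(hclosure_x p0 (frontier_subset_closure hp0F)).1])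
      have h3 : 0 < δ * Real.exp (γ * p0.1) := by positivity
      have h4 : -(σ * z p0) ≤ KQ := by
        rw [hzq]
        rcases hσ with rfl | rfl
        · have := neg_abs_le (Q p0); simp only [one_mul]; linarith
        · have := le_abs_self (Q p0); simp only [neg_one_mul, neg_neg]; linarith
      show 0 ≤ KQ + c * (p0.1 - mx) + σ * z p0 + δ * Real.exp (γ * p0.1)
      linarith
  -- pass to the limit δ → 0
  have hWz : ∀ σ : ℝ, (σ = 1 ∨ σ = -1) → 0 ≤ KQ + c * (pt.1 - mx) + σ * z pt := by
    intro σ hσ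
    by_contra hcon
    push_neg at hcon
    set V := KQ + c * (pt.1 - mx) + σ * z pt with hV
    have hVneg : V < 0 := hcon
    set δ0 := -V / (2 * Real.exp (γ * pt.1)) with hδ0def
    have hδ0 : 0 < δ0 := div_pos (by linarith) (by positivity)
    have hcl := claim σ hσ δ0 hδ0 pt hpt
    have hE : δ0 * Real.exp (γ * pt.1) = -V / 2 := by
      rw [hδ0def]
      field_simp
    rw [show KQ + c * (pt.1 - mx) + σ * z pt + δ0 * Real.exp (γ * pt.1)
        = V + δ0 * Real.exp (γ * pt.1) from by rw [hV]] at hcl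
    rw [hE] at hcl
    linarith
  have h1 := hWz 1 (Or.inl rfl)
  have h2 := hWz (-1) (Or.inr rfl)
  have habs : |z pt| ≤ KQ + c * (pt.1 - mx) := by
    rw [abs_le]
    constructor <;> nlinarith
  have hlast : c * (pt.1 - mx) ≤ ((Mx - mx) / α) * KP := by
    have hle : pt.1 - mx ≤ Mx - mx := by linarith [(hclosure_x pt hpt).2]
    have := mul_le_mul_of_nonneg_left hle hc0
    calc c * (pt.1 - mx) ≤ c * (Mx - mx) := this
      _ = ((Mx - mx) / α) * KP := by rw [hcdef]; ring
  linarith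

end Aux
end

section
/- Let N, M ≥ 2 be integers, ε > 0, and let 0 = r_0 < r_1 < … < r_N and t_0 < t_1 < … < t_M be arbitrary meshes with steps h_i = r_i − r_{i−1}, k_j = t_j − t_{j−1}, and averaged steps h̄_i = (h_i + h_{i+1})/2, k̄_j = (k_j + k_{j+1})/2. For a mesh function Z on {0,…,N}×{0,…,M} define the one-sided differences D⁺_r Z(i,j) = (Z(i+1,j) − Z(i,j))/h_{i+1}, D⁻_r Z(i,j) = (Z(i,j) − Z(i−1,j))/h_i, and similarly D⁺_t, D⁻_t; for a real coefficient c define the upwinded term (c D^±_r Z)(i,j) := ((c − |c|)/2)·D⁺_r Z(i,j) + ((c + |c|)/2)·D⁻_r Z(i,j), and analogously in t. Suppose at every interior index (1 ≤ i ≤ N−1, 1 ≤ j ≤ M−1) we are given strictly positive weights s(i,j), p⁺(i,j), p⁻(i,j), w(i,j), q⁺(i,j), q⁻(i,j) > 0, arbitrary real coefficients c(i,j), d(i,j), and b(i,j) ≥ 0, and define L^N Z(i,j) := −ε·s(i,j)·(p⁺(i,j)D⁺_r Z(i,j) − p⁻(i,j)D⁻_r Z(i,j))/h̄_i − ε·w(i,j)·(q⁺(i,j)D⁺_t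 Z(i,j) − q⁻(i,j)D⁻_t Z(i,j))/k̄_j + (c(i,j) D^±_r Z)(i,j) + (d(i,j) D^±_t Z)(i,j) + b(i,j)·Z(i,j). If Z ≥ 0 at all boundary indices (i ∈ {0,N} or j ∈ {0,M}) and L^N Z ≥ 0 at all interior indices, then Z ≥ 0 at all indices. -/
/-- Forward difference in the r-direction on a nonuniform mesh with steps `h`. -/
noncomputable def DpR (h : ℕ → ℝ) (Z : ℕ → ℕ → ℝ) (i j : ℕ) : ℝ :=
  (Z (i+1) j - Z i j) / h (i+1)

/-- Backward difference in the r-direction on a nonuniform mesh with steps `h`. -/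
noncomputable def DmR (h : ℕ → ℝ) (Z : ℕ → ℕ → ℝ) (i j : ℕ) : ℝ :=
  (Z i j - Z (i-1) j) / h i

/-- Forward difference in the t-direction on a nonuniform mesh with steps `k`. -/
noncomputable def DpT (k : ℕ → ℝ) (Z : ℕ → ℕ → ℝ) (i j : ℕ) : ℝ :=
  (Z i (j+1) - Z i j) / k (j+1)

/-- Backward difference in the t-direction on a nonuniform mesh with steps `k`. -/
noncomputable def DmT (k : ℕ → ℝ) (Z : ℕ → ℕ → ℝ) (i j : ℕ) : ℝ :=
  (Z i j - Z i (j-1)) / k j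

/-- Upwinded convective term `(c D^±) = ((c - |c|)/2) D⁺ + ((c + |c|)/2) D⁻`. -/
noncomputable def upwind (c Dp Dm : ℝ) : ℝ :=
  (c - |c|) / 2 * Dp + (c + |c|) / 2 * Dm

/-- The upwinded finite difference operator on the strip, with general positive weights. -/
noncomputable def LN3 (ε : ℝ) (h k : ℕ → ℝ) (s pp pm w qp qm c d b : ℕ → ℕ → ℝ)
    (Z : ℕ → ℕ → ℝ) (i j : ℕ) : ℝ :=
  -ε * s i j * (pp i j * DpR h Z i j - pm i j * DmR h Z i j) / ((h i + h (i+1)) / 2)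
  - ε * w i j * (qp i j * DpT k Z i j - qm i j * DmT k Z i j) / ((k j + k (j+1)) / 2)
  + upwind (c i j) (DpR h Z i j) (DmR h Z i j)
  + upwind (d i j) (DpT k Z i j) (DmT k Z i j)
  + b i j * Z i j

/-- Key algebraic fact: at a negative interior minimum (strict towards the right
neighbour) the upwinded operator takes a strictly negative value. -/
lemma comp_key (ε s pp pm w qp qm c d b m a bm cp cm h1 h2 k1 k2 : ℝ)
    (hε : 0 < ε) (hs : 0 < s) (hpp : 0 < pp) (hpm : 0 < pm) (hw : 0 < w)
    (hqp : 0 < qp) (hqm : 0 < qm) (hb : 0 ≤ b)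
    (hh1 : 0 < h1) (hh2 : 0 < h2) (hk1 : 0 < k1) (hk2 : 0 < k2)
    (hm : m < 0) (ha : m < a) (hbm : m ≤ bm) (hcp : m ≤ cp) (hcm : m ≤ cm) :
    -ε * s * (pp * ((a - m) / h2) - pm * ((m - bm) / h1)) / ((h1 + h2) / 2)
    - ε * w * (qp * ((cp - m) / k2) - qm * ((m - cm) / k1)) / ((k1 + k2) / 2)
    + ((c - |c|) / 2 * ((a - m) / h2) + (c + |c|) / 2 * ((m - bm) / h1))
    + ((d - |d|) / 2 * ((cp - m) / k2) + (d + |d|) / 2 * ((m - cm) / k1))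
    + b * m < 0 := by
  have hDp : 0 < (a - m) / h2 := div_pos (by linarith) hh2
  have hDm : (m - bm) / h1 ≤ 0 := div_nonpos_of_nonpos_of_nonneg (by linarith) hh1.le
  have hDpt : 0 ≤ (cp - m) / k2 := div_nonneg (by linarith) hk2.le
  have hDmt : (m - cm) / k1 ≤ 0 := div_nonpos_of_nonpos_of_nonneg (by linarith) hk1.le
  have hX : 0 < pp * ((a - m) / h2) - pm * ((m - bm) / h1) := by
    have h1' : 0 < pp * ((a - m) / h2) := mul_pos hpp hDp
    have h2' : pm * ((m - bm) / h1) ≤ 0 := mul_nonpos_of_nonneg_of_nonpos hpm.le hDm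
    linarith
  have hY : 0 ≤ qp * ((cp - m) / k2) - qm * ((m - cm) / k1) := by
    have h1' : 0 ≤ qp * ((cp - m) / k2) := mul_nonneg hqp.le hDpt
    have h2' : qm * ((m - cm) / k1) ≤ 0 := mul_nonpos_of_nonneg_of_nonpos hqm.le hDmt
    linarith
  have hT1 : -ε * s * (pp * ((a - m) / h2) - pm * ((m - bm) / h1)) / ((h1 + h2) / 2) < 0 := by
    have hpos' : 0 < ε * s * (pp * ((a - m) / h2) - pm * ((m - bm) / h1)) / ((h1 + h2) / 2) :=
      div_pos (mul_pos (mul_pos hε hs) hX) (by linarith)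
    rw [show -ε * s * (pp * ((a - m) / h2) - pm * ((m - bm) / h1)) / ((h1 + h2) / 2)
        = -(ε * s * (pp * ((a - m) / h2) - pm * ((m - bm) / h1)) / ((h1 + h2) / 2)) from by ring]
    linarith
  have hT2 : 0 ≤ ε * w * (qp * ((cp - m) / k2) - qm * ((m - cm) / k1)) / ((k1 + k2) / 2) :=
    div_nonneg (mul_nonneg (mul_nonneg hε.le hw.le) hY) (by linarith)
  have hT3 : (c - |c|) / 2 * ((a - m) / h2) ≤ 0 :=
    mul_nonpos_of_nonpos_of_nonneg (by have := le_abs_self c; linarith) hDp.le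
  have hT4 : (c + |c|) / 2 * ((m - bm) / h1) ≤ 0 :=
    mul_nonpos_of_nonneg_of_nonpos (by have := neg_abs_le c; linarith) hDm
  have hT5 : (d - |d|) / 2 * ((cp - m) / k2) ≤ 0 :=
    mul_nonpos_of_nonpos_of_nonneg (by have := le_abs_self d; linarith) hDpt
  have hT6 : (d + |d|) / 2 * ((m - cm) / k1) ≤ 0 :=
    mul_nonpos_of_nonneg_of_nonpos (by have := neg_abs_le d; linarith) hDmt
  have hT7 : b * m ≤ 0 := mul_nonpos_of_nonneg_of_nonpos hb hm.le
  linarith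

/-- Discrete comparison principle for the upwinded operator `L̃^N` on the strip mesh. -/
theorem stmt3 (N M : ℕ) (hN : 2 ≤ N) (hM : 2 ≤ M) (ε : ℝ) (hε : 0 < ε)
    (r t : ℕ → ℝ) (hr0 : r 0 = 0)
    (hr : ∀ n, n < N → r n < r (n+1)) (ht : ∀ n, n < M → t n < t (n+1))
    (s pp pm w qp qm c d b : ℕ → ℕ → ℝ)
    (hpos : ∀ i j, 1 ≤ i → i ≤ N - 1 → 1 ≤ j → j ≤ M - 1 →
      0 < s i j ∧ 0 < pp i j ∧ 0 < pm i j ∧ 0 < w i j ∧ 0 < qp i j ∧ 0 < qm i j)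
    (hb : ∀ i j, 1 ≤ i → i ≤ N - 1 → 1 ≤ j → j ≤ M - 1 → 0 ≤ b i j)
    (Z : ℕ → ℕ → ℝ)
    (hbdry : ∀ i j, i ≤ N → j ≤ M → (i = 0 ∨ i = N ∨ j = 0 ∨ j = M) → 0 ≤ Z i j)
    (hint : ∀ i j, 1 ≤ i → i ≤ N - 1 → 1 ≤ j → j ≤ M - 1 →
      0 ≤ LN3 ε (fun n => r n - r (n-1)) (fun n => t n - t (n-1))
             s pp pm w qp qm c d b Z i j) :
    ∀ i j, i ≤ N → j ≤ M → 0 ≤ Z i j := by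
  by_contra hcon
  push_neg at hcon
  obtain ⟨i₀, j₀, hi₀, hj₀, hneg⟩ := hcon
  set S : Finset (ℕ × ℕ) := (Finset.range (N+1)) ×ˢ (Finset.range (M+1)) with hS
  have hp0 : (i₀, j₀) ∈ S := by
    simp only [hS, Finset.mem_product, Finset.mem_range]; omega
  obtain ⟨p, hpS, hpmin⟩ := S.exists_min_image (fun q => Z q.1 q.2) ⟨_, hp0⟩
  set m := Z p.1 p.2 with hm
  have hmneg : m < 0 := lt_of_le_of_lt (hpmin _ hp0) hneg
  set T : Finset (ℕ × ℕ) := S.filter (fun q => Z q.1 q.2 ≤ m) with hT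
  have hpT : p ∈ T := by simp [hT, hpS]; exact le_rfl
  obtain ⟨q, hqT, hqmax⟩ := T.exists_max_image (fun q => q.1 + q.2) ⟨p, hpT⟩
  obtain ⟨hqS, hqle⟩ := Finset.mem_filter.mp hqT
  have hqm' : Z q.1 q.2 = m := le_antisymm hqle (hpmin _ hqS)
  obtain ⟨hq1, hq2⟩ := Finset.mem_product.mp hqS
  rw [Finset.mem_range] at hq1 hq2
  set i := q.1 with hi
  set j := q.2 with hj
  -- interiority
  have hiN : i ≤ N := by omega
  have hjM : j ≤ M := by omega
  have hi1 : 1 ≤ i := by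
    rcases Nat.eq_zero_or_pos i with h0 | h1
    · exact absurd (hqm' ▸ hbdry i j hiN hjM (Or.inl h0)) (by linarith)
    · exact h1
  have hiN1 : i ≤ N - 1 := by
    rcases Nat.lt_or_ge i N with h0 | h1
    · omega
    · have hiN' : i = N := by omega
      exact absurd (hqm' ▸ hbdry i j hiN hjM (Or.inr (Or.inl hiN'))) (by linarith)
  have hj1 : 1 ≤ j := by
    rcases Nat.eq_zero_or_pos j with h0 | h1
    · exact absurd (hqm' ▸ hbdry i j hiN hjM (Or.inr (Or.inr (Or.inl h0)))) (by linarith)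
    · exact h1
  have hjM1 : j ≤ M - 1 := by
    rcases Nat.lt_or_ge j M with h0 | h1
    · omega
    · have hjM' : j = M := by omega
      exact absurd (hqm' ▸ hbdry i j hiN hjM (Or.inr (Or.inr (Or.inr hjM')))) (by linarith)
  -- neighbours
  have memS : ∀ a b : ℕ, a ≤ N → b ≤ M → (a, b) ∈ S := by
    intro a b ha hb'
    simp only [hS, Finset.mem_product, Finset.mem_range]; omega
  have ha : Z i j < Z (i+1) j := by
    by_contra h
    push_neg at h
    have hmem : ((i+1, j) : ℕ × ℕ) ∈ T := by
      refine Finset.mem_filter.mpr ⟨memS (i+1) j (by omega) hjM, ?_⟩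
      simpa using le_trans h (le_of_eq hqm')
    have h2' : i + 1 + j ≤ i + j := hqmax (i+1, j) hmem
    omega
  have hbm : Z i j ≤ Z (i-1) j := hqm' ▸ hpmin ((i-1), j) (memS (i-1) j (by omega) hjM)
  have hcp : Z i j ≤ Z i (j+1) := hqm' ▸ hpmin (i, (j+1)) (memS i (j+1) hiN (by omega))
  have hcm : Z i j ≤ Z i (j-1) := hqm' ▸ hpmin (i, (j-1)) (memS i (j-1) hiN (by omega))
  have hmZ : Z i j < 0 := hqm' ▸ hmneg
  -- mesh steps positive
  have hh1 : 0 < r i - r (i-1) := by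
    have h' := hr (i-1) (by omega)
    have e : i - 1 + 1 = i := by omega
    rw [e] at h'; linarith
  have hh2 : 0 < r (i+1) - r i := by
    have h' := hr i (by omega); linarith
  have hk1 : 0 < t j - t (j-1) := by
    have h' := ht (j-1) (by omega)
    have e : j - 1 + 1 = j := by omega
    rw [e] at h'; linarith
  have hk2 : 0 < t (j+1) - t j := by
    have h' := ht j (by omega); linarith
  obtain ⟨hs', hpp', hpm', hw', hqp', hqm2'⟩ := hpos i j hi1 hiN1 hj1 hjM1
  have hb' := hb i j hi1 hiN1 hj1 hjM1
  have hL := hint i j hi1 hiN1 hj1 hjM1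
  simp only [LN3, upwind, DpR, DmR, DpT, DmT, Nat.add_sub_cancel] at hL
  have hkey := comp_key ε (s i j) (pp i j) (pm i j) (w i j) (qp i j) (qm i j)
    (c i j) (d i j) (b i j) (Z i j) (Z (i+1) j) (Z (i-1) j) (Z i (j+1)) (Z i (j-1))
    (r i - r (i-1)) (r (i+1) - r i) (t j - t (j-1)) (t (j+1) - t j)
    hε hs' hpp' hpm' hw' hqp' hqm2' hb' hh1 hh2 hk1 hk2 hmZ ha hbm hcp hcm
  linarith
end

section
/- There exists a constant C with the following property, where C is allowed to depend only on an upper bound M for the C³-norm of a. Let x_{i−1} < x_i < x_{i+1} be real numbers, h := x_i − x_{i−1}, h' := x_{i+1} − x_i, h̄ := (h + h')/2, H := max(h, h'), and I := [x_{i−1}, x_{i+1}]. Let a be three times continuously differentiable on I with ‖a‖_{C³(I)} ≤ M and let u be four times continuously differentiable on I. Define the discrete flux T := [ a((x_i + x_{i+1})/2)·(u(x_{i+1}) − u(x_i))/h' − a((x_{i−1} + x_i)/2)·(u(x_i) − u(x_{i−1}))/h ] / h̄. Then |(a u')'(x_i) − T| ≤ C·[ |h' − h|·( |a''(x_i)|·|u'(x_i)|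 + |a'(x_i)|·|u''(x_i)| + |a(x_i)|·|u'''(x_i)| ) + H²·( ‖a'''‖_{∞,I}·|u'(x_i)| + ‖a''‖_{∞,I}·|u''(x_i)| ) + H·min{ ‖u'''‖_{∞,I}, H·(‖u'''‖_{∞,I} + ‖u''''‖_{∞,I}) } ]. -/
open Set

private lemma iDW_nhds {f : ℝ → ℝ} {s : Set ℝ} {x : ℝ} (h : s ∈ nhds x) (n : ℕ) :
    iteratedDerivWithin n f s x = iteratedDeriv n f x := by
  rw [iteratedDerivWithin, iteratedDeriv, ← iteratedFDerivWithin_univ,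
    ← Set.univ_inter s, iteratedFDerivWithin_inter h]

private lemma bdd_from_interior {F : ℝ → ℝ} {xm xp K : ℝ} (hlt : xm < xp)
    (hF : ContinuousOn F (Set.Icc xm xp))
    (hb : ∀ y ∈ Set.Ioo xm xp, |F y| ≤ K) :
    ∀ t ∈ Set.Icc xm xp, |F t| ≤ K := by
  intro t ht
  have hcl : t ∈ closure (Set.Ioo xm xp) := by rwa [closure_Ioo hlt.ne]
  have hne : (nhdsWithin t (Set.Ioo xm xp)).NeBot := mem_closure_iff_nhdsWithin_neBot.mp hcl
  have htend : Filter.Tendsto (fun y => |F y|) (nhdsWithin t (Set.Ioo xm xp)) (nhds |F t|) :=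
    ((hF t ht).mono Set.Ioo_subset_Icc_self).abs
  exact le_of_tendsto htend (eventually_nhdsWithin_of_forall hb)

private lemma abs_sub_le_uIcc {c x t : ℝ} (ht : t ∈ Set.uIcc c x) : |t - c| ≤ |x - c| := by
  rcases le_total c x with h | h
  · rw [Set.uIcc_of_le h] at ht
    rw [abs_of_nonneg (by linarith [ht.1]), abs_of_nonneg (by linarith)]
    linarith [ht.2]
  · rw [Set.uIcc_of_ge h] at ht
    rw [abs_of_nonpos (by linarith [ht.2]), abs_of_nonpos (by linarith)]
    linarith [ht.1]

private lemma tay1 {f f₁ : ℝ → ℝ} {s : Set ℝ} (hs : Convex ℝ s)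
    (hf : ∀ t ∈ s, HasDerivWithinAt f (f₁ t) s t) {K c x : ℝ}
    (hb : ∀ t ∈ s, |f₁ t| ≤ K) (hc : c ∈ s) (hx : x ∈ s) :
    |f x - f c| ≤ K * |x - c| := by
  have := hs.norm_image_sub_le_of_norm_hasDerivWithin_le hf
    (fun t ht => by rw [Real.norm_eq_abs]; exact hb t ht) hc hx
  simpa [Real.norm_eq_abs] using this

private lemma tay2 {f f₁ f₂ : ℝ → ℝ} {s : Set ℝ} (hs : Convex ℝ s)
    (hf : ∀ t ∈ s, HasDerivWithinAt f (f₁ t) s t)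
    (hf1 : ∀ t ∈ s, HasDerivWithinAt f₁ (f₂ t) s t) {K c x : ℝ}
    (hb : ∀ t ∈ s, |f₂ t| ≤ K) (hc : c ∈ s) (hx : x ∈ s) :
    |f x - (f c + f₁ c * (x - c))| ≤ K * |x - c| ^ 2 := by
  have hsub : Set.uIcc c x ⊆ s := hs.ordConnected.uIcc_subset hc hx
  set g := fun t => f t - (f c + f₁ c * (t - c)) with hg
  have hgd : ∀ t ∈ Set.uIcc c x, HasDerivWithinAt g (f₁ t - f₁ c) (Set.uIcc c x) t := by
    intro t ht
    have h2 : HasDerivWithinAt (fun t => f c + f₁ c * (t - c)) (f₁ c) (Set.uIcc c x) t := by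
      simpa using (((hasDerivWithinAt_id t _).sub_const c).const_mul (f₁ c)).const_add (f c)
    exact ((hf t (hsub ht)).mono hsub).sub h2
  have hK : 0 ≤ K := le_trans (abs_nonneg _) (hb c hc)
  have hbd : ∀ t ∈ Set.uIcc c x, ‖f₁ t - f₁ c‖ ≤ K * |x - c| := by
    intro t ht
    rw [Real.norm_eq_abs]
    calc |f₁ t - f₁ c| ≤ K * |t - c| := by
          simpa using tay1 hs hf1 hb hc (hsub ht)
      _ ≤ K * |x - c| := mul_le_mul_of_nonneg_left (abs_sub_le_uIcc ht) hK
  have := (convex_uIcc c x).norm_image_sub_le_of_norm_hasDerivWithin_le hgd hbd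
    Set.left_mem_uIcc Set.right_mem_uIcc
  have hgc : g c = 0 := by simp [hg]
  rw [hgc, sub_zero, Real.norm_eq_abs, Real.norm_eq_abs] at this
  calc |g x| ≤ K * |x - c| * |x - c| := this
    _ = K * |x - c| ^ 2 := by ring

private lemma tay3 {f f₁ f₂ f₃ : ℝ → ℝ} {s : Set ℝ} (hs : Convex ℝ s)
    (hf : ∀ t ∈ s, HasDerivWithinAt f (f₁ t) s t)
    (hf1 : ∀ t ∈ s, HasDerivWithinAt f₁ (f₂ t) s t)
    (hf2 : ∀ t ∈ s, HasDerivWithinAt f₂ (f₃ t) s t) {K c x : ℝ}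
    (hb : ∀ t ∈ s, |f₃ t| ≤ K) (hc : c ∈ s) (hx : x ∈ s) :
    |f x - (f c + f₁ c * (x - c) + f₂ c / 2 * (x - c) ^ 2)| ≤ K * |x - c| ^ 3 := by
  have hsub : Set.uIcc c x ⊆ s := hs.ordConnected.uIcc_subset hc hx
  set g := fun t => f t - (f c + f₁ c * (t - c) + f₂ c / 2 * (t - c) ^ 2) with hg
  have hgd : ∀ t ∈ Set.uIcc c x,
      HasDerivWithinAt g (f₁ t - (f₁ c + f₂ c * (t - c))) (Set.uIcc c x) t := by
    intro t ht
    have h1 : HasDerivWithinAt (fun t => (t - c) ^ 2) (2 * (t - c)) (Set.uIcc c x) t := by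
      simpa using ((hasDerivWithinAt_id t (Set.uIcc c x)).sub_const c).fun_pow 2
    have h2 : HasDerivWithinAt (fun t => f c + f₁ c * (t - c) + f₂ c / 2 * (t - c) ^ 2)
        (f₁ c + f₂ c * (t - c)) (Set.uIcc c x) t := by
      have := ((((hasDerivWithinAt_id t (Set.uIcc c x)).sub_const c).const_mul
        (f₁ c)).const_add (f c)).fun_add (h1.const_mul (f₂ c / 2))
      refine this.congr_deriv ?_
      ring
    exact ((hf t (hsub ht)).mono hsub).sub h2
  have hK : 0 ≤ K := le_trans (abs_nonneg _) (hb c hc)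
  have hbd : ∀ t ∈ Set.uIcc c x,
      ‖f₁ t - (f₁ c + f₂ c * (t - c))‖ ≤ K * |x - c| ^ 2 := by
    intro t ht
    rw [Real.norm_eq_abs]
    calc |f₁ t - (f₁ c + f₂ c * (t - c))| ≤ K * |t - c| ^ 2 :=
          tay2 hs hf1 hf2 hb hc (hsub ht)
      _ ≤ K * |x - c| ^ 2 := by
          apply mul_le_mul_of_nonneg_left _ hK
          exact pow_le_pow_left₀ (abs_nonneg _) (abs_sub_le_uIcc ht) 2
  have := (convex_uIcc c x).norm_image_sub_le_of_norm_hasDerivWithin_le hgd hbd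
    Set.left_mem_uIcc Set.right_mem_uIcc
  have hgc : g c = 0 := by simp [hg]
  rw [hgc, sub_zero, Real.norm_eq_abs, Real.norm_eq_abs] at this
  calc |g x| ≤ K * |x - c| ^ 2 * |x - c| := this
    _ = K * |x - c| ^ 3 := by ring

private lemma tay4 {f f₁ f₂ f₃ f₄ : ℝ → ℝ} {s : Set ℝ} (hs : Convex ℝ s)
    (hf : ∀ t ∈ s, HasDerivWithinAt f (f₁ t) s t)
    (hf1 : ∀ t ∈ s, HasDerivWithinAt f₁ (f₂ t) s t)
    (hf2 : ∀ t ∈ s, HasDerivWithinAt f₂ (f₃ t) s t)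
    (hf3 : ∀ t ∈ s, HasDerivWithinAt f₃ (f₄ t) s t) {K c x : ℝ}
    (hb : ∀ t ∈ s, |f₄ t| ≤ K) (hc : c ∈ s) (hx : x ∈ s) :
    |f x - (f c + f₁ c * (x - c) + f₂ c / 2 * (x - c) ^ 2 + f₃ c / 6 * (x - c) ^ 3)|
      ≤ K * |x - c| ^ 4 := by
  have hsub : Set.uIcc c x ⊆ s := hs.ordConnected.uIcc_subset hc hx
  set g := fun t => f t -
    (f c + f₁ c * (t - c) + f₂ c / 2 * (t - c) ^ 2 + f₃ c / 6 * (t - c) ^ 3) with hg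
  have hgd : ∀ t ∈ Set.uIcc c x,
      HasDerivWithinAt g (f₁ t - (f₁ c + f₂ c * (t - c) + f₃ c / 2 * (t - c) ^ 2))
        (Set.uIcc c x) t := by
    intro t ht
    have h1 : HasDerivWithinAt (fun t => (t - c) ^ 2) (2 * (t - c)) (Set.uIcc c x) t := by
      simpa using ((hasDerivWithinAt_id t (Set.uIcc c x)).sub_const c).fun_pow 2
    have h1' : HasDerivWithinAt (fun t => (t - c) ^ 3) (3 * (t - c) ^ 2) (Set.uIcc c x) t := by
      simpa using ((hasDerivWithinAt_id t (Set.uIcc c x)).sub_const c).fun_pow 3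
    have h2 : HasDerivWithinAt
        (fun t => f c + f₁ c * (t - c) + f₂ c / 2 * (t - c) ^ 2 + f₃ c / 6 * (t - c) ^ 3)
        (f₁ c + f₂ c * (t - c) + f₃ c / 2 * (t - c) ^ 2) (Set.uIcc c x) t := by
      have := (((((hasDerivWithinAt_id t (Set.uIcc c x)).sub_const c).const_mul
        (f₁ c)).const_add (f c)).fun_add (h1.const_mul (f₂ c / 2))).fun_add (h1'.const_mul (f₃ c / 6))
      refine this.congr_deriv ?_
      ring
    exact ((hf t (hsub ht)).mono hsub).sub h2
  have hK : 0 ≤ K := le_trans (abs_nonneg _) (hb c hc)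
  have hbd : ∀ t ∈ Set.uIcc c x,
      ‖f₁ t - (f₁ c + f₂ c * (t - c) + f₃ c / 2 * (t - c) ^ 2)‖ ≤ K * |x - c| ^ 3 := by
    intro t ht
    rw [Real.norm_eq_abs]
    calc |f₁ t - (f₁ c + f₂ c * (t - c) + f₃ c / 2 * (t - c) ^ 2)| ≤ K * |t - c| ^ 3 :=
          tay3 hs hf1 hf2 hf3 hb hc (hsub ht)
      _ ≤ K * |x - c| ^ 3 := by
          apply mul_le_mul_of_nonneg_left _ hK
          exact pow_le_pow_left₀ (abs_nonneg _) (abs_sub_le_uIcc ht) 3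
  have := (convex_uIcc c x).norm_image_sub_le_of_norm_hasDerivWithin_le hgd hbd
    Set.left_mem_uIcc Set.right_mem_uIcc
  have hgc : g c = 0 := by simp [hg]
  rw [hgc, sub_zero, Real.norm_eq_abs, Real.norm_eq_abs] at this
  calc |g x| ≤ K * |x - c| ^ 3 * |x - c| := this
    _ = K * |x - c| ^ 4 := by ring

private lemma sup_bound {g : ℝ → ℝ} {xm xp : ℝ} (hlt : xm < xp) {k : ℕ} {n : WithTop ℕ∞}
    (hg : ContDiffOn ℝ n g (Set.Icc xm xp)) (hk : (k : WithTop ℕ∞) ≤ n) :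
    ∀ t ∈ Set.Icc xm xp, |iteratedDerivWithin k g (Set.Icc xm xp) t|
      ≤ sSup ((fun x => |iteratedDeriv k g x|) '' Set.Icc xm xp) := by
  have hUD : UniqueDiffOn ℝ (Set.Icc xm xp) := uniqueDiffOn_Icc hlt
  have hcont : ContinuousOn (iteratedDerivWithin k g (Set.Icc xm xp)) (Set.Icc xm xp) :=
    hg.continuousOn_iteratedDerivWithin hk hUD
  have heq : ∀ y ∈ Set.Ioo xm xp,
      iteratedDerivWithin k g (Set.Icc xm xp) y = iteratedDeriv k g y :=
    fun y hy => iDW_nhds (Icc_mem_nhds hy.1 hy.2) k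
  obtain ⟨B, hB⟩ := (isCompact_Icc).exists_bound_of_continuousOn hcont
  have hbdd : BddAbove ((fun x => |iteratedDeriv k g x|) '' Set.Icc xm xp) := by
    refine ⟨max B (max (|iteratedDeriv k g xm|) (|iteratedDeriv k g xp|)), ?_⟩
    rintro y ⟨t, ht, rfl⟩
    rcases eq_or_ne t xm with rfl | h1
    · exact le_max_of_le_right (le_max_left _ _)
    rcases eq_or_ne t xp with rfl | h2
    · exact le_max_of_le_right (le_max_right _ _)
    have htI : t ∈ Set.Ioo xm xp := ⟨lt_of_le_of_ne ht.1 (Ne.symm h1), lt_of_le_of_ne ht.2 h2⟩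
    show |iteratedDeriv k g t| ≤ _
    rw [← heq t htI]
    exact le_max_of_le_left (by simpa [Real.norm_eq_abs] using hB t ht)
  refine bdd_from_interior hlt hcont ?_
  intro y hy
  rw [heq y hy]
  exact le_csSup hbdd ⟨y, Set.Ioo_subset_Icc_self hy, rfl⟩

set_option maxHeartbeats 4000000 in
/-- Truncation error bound for the weighted upwind flux discretization
`(h_i/h̄_i) D⁻(a(x_{i+1/2}) D⁺ u)(x_i)` on a nonuniform mesh. -/
theorem stmt7 (M : ℝ) : ∃ C : ℝ, 0 < C ∧
    ∀ (xm xi xp : ℝ) (a u : ℝ → ℝ),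
      xm < xi → xi < xp →
      ContDiffOn ℝ 3 a (Set.Icc xm xp) →
      ContDiffOn ℝ 4 u (Set.Icc xm xp) →
      (∀ x ∈ Set.Icc xm xp, ∀ k ≤ 3, |iteratedDeriv k a x| ≤ M) →
      |deriv (fun x => a x * deriv u x) xi -
          (a ((xi + xp) / 2) * (u xp - u xi) / (xp - xi) -
            a ((xm + xi) / 2) * (u xi - u xm) / (xi - xm)) /
            (((xi - xm) + (xp - xi)) / 2)| ≤
        C * (|(xp - xi) - (xi - xm)| *
              (|iteratedDeriv 2 a xi| * |deriv u xi| +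
               |deriv a xi| * |iteratedDeriv 2 u xi| +
               |a xi| * |iteratedDeriv 3 u xi|) +
             (max (xi - xm) (xp - xi)) ^ 2 *
              (sSup ((fun x => |iteratedDeriv 3 a x|) '' Set.Icc xm xp) * |deriv u xi| +
               sSup ((fun x => |iteratedDeriv 2 a x|) '' Set.Icc xm xp) *
                 |iteratedDeriv 2 u xi|) +
             (max (xi - xm) (xp - xi)) *
              min (sSup ((fun x => |iteratedDeriv 3 u x|) '' Set.Icc xm xp))
                ((max (xi - xm) (xp - xi)) *
                  (sSup ((fun x => |iteratedDeriv 3 u x|) '' Set.Icc xm xp) +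
                   sSup ((fun x => |iteratedDeriv 4 u x|) '' Set.Icc xm xp)))) := by
  refine ⟨512 * (|M| + 1), by positivity, ?_⟩
  intro xm xi xp a u hmi hip ha hu hM
  have hmp : xm < xp := hmi.trans hip
  set S := Set.Icc xm xp with hSd
  have hUD : UniqueDiffOn ℝ S := uniqueDiffOn_Icc hmp
  have hconv : Convex ℝ S := convex_Icc xm xp
  have hiS : xi ∈ S := ⟨hmi.le, hip.le⟩
  have hmS : xm ∈ S := ⟨le_refl _, hmp.le⟩
  have hpS : xp ∈ S := ⟨hmp.le, le_refl _⟩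
  have hSnh : S ∈ nhds xi := Icc_mem_nhds hmi hip
  set u1 := iteratedDerivWithin 1 u S with hu1f
  set u2 := iteratedDerivWithin 2 u S with hu2f
  set u3 := iteratedDerivWithin 3 u S with hu3f
  set u4 := iteratedDerivWithin 4 u S with hu4f
  set a1 := iteratedDerivWithin 1 a S with ha1f
  set a2 := iteratedDerivWithin 2 a S with ha2f
  set a3 := iteratedDerivWithin 3 a S with ha3f
  -- derivative chains
  have hu0 : ∀ t ∈ S, HasDerivWithinAt u (u1 t) S t := by
    intro t ht
    rw [hu1f, iteratedDerivWithin_one]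
    exact ((hu.differentiableOn (by norm_num)) t ht).hasDerivWithinAt
  have hu1 : ∀ t ∈ S, HasDerivWithinAt u1 (u2 t) S t := by
    intro t ht
    rw [hu1f, hu2f, show (2:ℕ) = 1+1 from rfl, iteratedDerivWithin_succ (n := 1)]
    exact ((hu.differentiableOn_iteratedDerivWithin (by norm_num) hUD) t ht).hasDerivWithinAt
  have hu2 : ∀ t ∈ S, HasDerivWithinAt u2 (u3 t) S t := by
    intro t ht
    rw [hu2f, hu3f, show (3:ℕ) = 2+1 from rfl, iteratedDerivWithin_succ (n := 2)]
    exact ((hu.differentiableOn_iteratedDerivWithin (by norm_num) hUD) t ht).hasDerivWithinAt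
  have hu3 : ∀ t ∈ S, HasDerivWithinAt u3 (u4 t) S t := by
    intro t ht
    rw [hu3f, hu4f, show (4:ℕ) = 3+1 from rfl, iteratedDerivWithin_succ (n := 3)]
    exact ((hu.differentiableOn_iteratedDerivWithin (by norm_num) hUD) t ht).hasDerivWithinAt
  have ha0 : ∀ t ∈ S, HasDerivWithinAt a (a1 t) S t := by
    intro t ht
    rw [ha1f, iteratedDerivWithin_one]
    exact ((ha.differentiableOn (by norm_num)) t ht).hasDerivWithinAt
  have ha1 : ∀ t ∈ S, HasDerivWithinAt a1 (a2 t) S t := by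
    intro t ht
    rw [ha1f, ha2f, show (2:ℕ) = 1+1 from rfl, iteratedDerivWithin_succ (n := 1)]
    exact ((ha.differentiableOn_iteratedDerivWithin (by norm_num) hUD) t ht).hasDerivWithinAt
  have ha2 : ∀ t ∈ S, HasDerivWithinAt a2 (a3 t) S t := by
    intro t ht
    rw [ha2f, ha3f, show (3:ℕ) = 2+1 from rfl, iteratedDerivWithin_succ (n := 2)]
    exact ((ha.differentiableOn_iteratedDerivWithin (by norm_num) hUD) t ht).hasDerivWithinAt
  -- sup bounds
  set Ka2 := sSup ((fun x => |iteratedDeriv 2 a x|) '' S) with hKa2d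
  set Ka3 := sSup ((fun x => |iteratedDeriv 3 a x|) '' S) with hKa3d
  set Ku3 := sSup ((fun x => |iteratedDeriv 3 u x|) '' S) with hKu3d
  set Ku4 := sSup ((fun x => |iteratedDeriv 4 u x|) '' S) with hKu4d
  have hbKa2 : ∀ t ∈ S, |a2 t| ≤ Ka2 := sup_bound hmp ha (by norm_num)
  have hbKa3 : ∀ t ∈ S, |a3 t| ≤ Ka3 := sup_bound hmp ha (by norm_num)
  have hbKu3 : ∀ t ∈ S, |u3 t| ≤ Ku3 := sup_bound hmp hu (by norm_num)
  have hbKu4 : ∀ t ∈ S, |u4 t| ≤ Ku4 := sup_bound hmp hu (by norm_num)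
  have hKa2n : 0 ≤ Ka2 := (abs_nonneg _).trans (hbKa2 xi hiS)
  have hKa3n : 0 ≤ Ka3 := (abs_nonneg _).trans (hbKa3 xi hiS)
  have hKu3n : 0 ≤ Ku3 := (abs_nonneg _).trans (hbKu3 xi hiS)
  have hKu4n : 0 ≤ Ku4 := (abs_nonneg _).trans (hbKu4 xi hiS)
  -- M bounds
  have hMa0 : ∀ t ∈ S, |a t| ≤ M := fun t ht => by
    simpa [iteratedDeriv_zero] using hM t ht 0 (by norm_num)
  have hMa1 : ∀ t ∈ S, |a1 t| ≤ M := by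
    rw [ha1f]
    refine bdd_from_interior hmp (ha.continuousOn_iteratedDerivWithin (by norm_num) hUD) ?_
    intro y hy
    rw [iDW_nhds (Icc_mem_nhds hy.1 hy.2)]
    exact hM y (Set.Ioo_subset_Icc_self hy) 1 (by norm_num)
  have hM0 : 0 ≤ M := (abs_nonneg _).trans (hMa0 xi hiS)
  -- geometry
  set α := (xp - xi)/2 with hαd
  set β := (xi - xm)/2 with hβd
  set H := max (xi - xm) (xp - xi) with hHd
  set mp := (xi + xp)/2 with hmpd
  set mm := (xm + xi)/2 with hmmd
  have hα : 0 < α := by rw [hαd]; linarith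
  have hβ : 0 < β := by rw [hβd]; linarith
  have hab : 0 < α + β := by linarith
  have hmpS : mp ∈ S := by
    rw [hSd, hmpd, Set.mem_Icc]; constructor <;> linarith
  have hmmS : mm ∈ S := by
    rw [hSd, hmmd, Set.mem_Icc]; constructor <;> linarith
  have hmpxi : mp - xi = α := by rw [hmpd, hαd]; ring
  have hmmxi : mm - xi = -β := by rw [hmmd, hβd]; ring
  have hxpmp : xp - mp = α := by rw [hmpd, hαd]; ring
  have hximp : xi - mp = -α := by rw [hmpd, hαd]; ring
  have hximm : xi - mm = β := by rw [hmmd, hβd]; ring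
  have hxmmm : xm - mm = -β := by rw [hmmd, hβd]; ring
  have hmpmm : mp - mm = α + β := by rw [hmpd, hmmd, hαd, hβd]; ring
  have hαH : α ≤ H/2 := by
    rw [hαd, hHd]; have := le_max_right (xi - xm) (xp - xi); linarith
  have hβH : β ≤ H/2 := by
    rw [hβd, hHd]; have := le_max_left (xi - xm) (xp - xi); linarith
  have hHab : H/2 ≤ α + β := by
    rw [hHd, hαd, hβd, div_le_iff₀ (by norm_num : (0:ℝ) < 2)]
    apply max_le <;> [nlinarith; nlinarith]
  have hH : 0 < H := by linarith
  have hxpxi : xp - xi = 2*α := by rw [hαd]; ring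
  have hxixm : xi - xm = 2*β := by rw [hβd]; ring
  -- Taylor remainders
  set dp := (u xp - u xi)/(xp - xi) with hdpd
  set dm := (u xi - u xm)/(xi - xm) with hdmd
  set rp := dp - u1 mp with hrpd
  set rm := dm - u1 mm with hrmd
  set sp := rp - α^2/6 * u3 mp with hspd
  set sm := rm - β^2/6 * u3 mm with hsmd
  set σp := u1 mp - u1 xi - α * u2 xi with hσpd
  set σm := u1 mm - u1 xi + β * u2 xi with hσmd
  set σtp := σp - α^2/2 * u3 xi with hσtpd
  set σtm := σm - β^2/2 * u3 xi with hσtmd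
  set ρp := a mp - a xi - α * a1 xi - α^2/2 * a2 xi with hρpd
  set ρm := a mm - a xi + β * a1 xi - β^2/2 * a2 xi with hρmd
  set τp := a mp - a xi - α * a1 xi with hτpd
  set τm := a mm - a xi + β * a1 xi with hτmd
  set πp := a mp - a xi with hπpd
  set πm := a mm - a xi with hπmd
  have habs_p : |α| = α := abs_of_pos hα
  have habs_m : |β| = β := abs_of_pos hβ
  -- r bounds
  have hrp : |rp| ≤ Ku3 * α^2 := by
    have e1 := tay3 hconv hu0 hu1 hu2 hbKu3 hmpS hpS
    have e2 := tay3 hconv hu0 hu1 hu2 hbKu3 hmpS hiS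
    rw [hxpmp, habs_p] at e1
    rw [hximp, abs_neg, habs_p] at e2
    have hnum : |u xp - u xi - 2*α*(u1 mp)| ≤ 2*(Ku3 * α^3) := by
      have hXY : u xp - u xi - 2*α*(u1 mp) =
          (u xp - (u mp + u1 mp * α + u2 mp / 2 * α^2)) -
          (u xi - (u mp + u1 mp * (-α) + u2 mp / 2 * (-α)^2)) := by ring
      rw [hXY]
      exact (abs_sub _ _).trans (by linarith)
    have hrp2 : rp = (u xp - u xi - 2*α*(u1 mp))/(2*α) := by
      rw [hrpd, hdpd, hxpxi]
      field_simp
      try ring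
    rw [hrp2, abs_div, abs_of_pos (by linarith : (0:ℝ) < 2*α), div_le_iff₀ (by linarith)]
    calc |u xp - u xi - 2*α*(u1 mp)| ≤ 2*(Ku3*α^3) := hnum
      _ = Ku3 * α^2 * (2*α) := by ring
  have hrm : |rm| ≤ Ku3 * β^2 := by
    have e1 := tay3 hconv hu0 hu1 hu2 hbKu3 hmmS hiS
    have e2 := tay3 hconv hu0 hu1 hu2 hbKu3 hmmS hmS
    rw [hximm, habs_m] at e1
    rw [hxmmm, abs_neg, habs_m] at e2
    have hnum : |u xi - u xm - 2*β*(u1 mm)| ≤ 2*(Ku3 * β^3) := by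
      have hXY : u xi - u xm - 2*β*(u1 mm) =
          (u xi - (u mm + u1 mm * β + u2 mm / 2 * β^2)) -
          (u xm - (u mm + u1 mm * (-β) + u2 mm / 2 * (-β)^2)) := by ring
      rw [hXY]
      exact (abs_sub _ _).trans (by linarith)
    have hrm2 : rm = (u xi - u xm - 2*β*(u1 mm))/(2*β) := by
      rw [hrmd, hdmd, hxixm]
      field_simp
      try ring
    rw [hrm2, abs_div, abs_of_pos (by linarith : (0:ℝ) < 2*β), div_le_iff₀ (by linarith)]
    calc |u xi - u xm - 2*β*(u1 mm)| ≤ 2*(Ku3*β^3) := hnum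
      _ = Ku3 * β^2 * (2*β) := by ring
  have hsp : |sp| ≤ Ku4 * α^3 := by
    have e1 := tay4 hconv hu0 hu1 hu2 hu3 hbKu4 hmpS hpS
    have e2 := tay4 hconv hu0 hu1 hu2 hu3 hbKu4 hmpS hiS
    rw [hxpmp, habs_p] at e1
    rw [hximp, abs_neg, habs_p] at e2
    have hnum : |u xp - u xi - 2*α*(u1 mp) - α^3/3 * u3 mp| ≤ 2*(Ku4 * α^4) := by
      have hXY : u xp - u xi - 2*α*(u1 mp) - α^3/3 * u3 mp =
          (u xp - (u mp + u1 mp * α + u2 mp / 2 * α^2 + u3 mp / 6 * α^3)) -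
          (u xi - (u mp + u1 mp * (-α) + u2 mp / 2 * (-α)^2 + u3 mp / 6 * (-α)^3)) := by ring
      rw [hXY]
      exact (abs_sub _ _).trans (by linarith)
    have hsp2 : sp = (u xp - u xi - 2*α*(u1 mp) - α^3/3 * u3 mp)/(2*α) := by
      rw [hspd, hrpd, hdpd, hxpxi]
      field_simp
      try ring
    rw [hsp2, abs_div, abs_of_pos (by linarith : (0:ℝ) < 2*α), div_le_iff₀ (by linarith)]
    calc |u xp - u xi - 2*α*(u1 mp) - α^3/3 * u3 mp| ≤ 2*(Ku4*α^4) := hnum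
      _ = Ku4 * α^3 * (2*α) := by ring
  have hsm : |sm| ≤ Ku4 * β^3 := by
    have e1 := tay4 hconv hu0 hu1 hu2 hu3 hbKu4 hmmS hiS
    have e2 := tay4 hconv hu0 hu1 hu2 hu3 hbKu4 hmmS hmS
    rw [hximm, habs_m] at e1
    rw [hxmmm, abs_neg, habs_m] at e2
    have hnum : |u xi - u xm - 2*β*(u1 mm) - β^3/3 * u3 mm| ≤ 2*(Ku4 * β^4) := by
      have hXY : u xi - u xm - 2*β*(u1 mm) - β^3/3 * u3 mm =
          (u xi - (u mm + u1 mm * β + u2 mm / 2 * β^2 + u3 mm / 6 * β^3)) -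
          (u xm - (u mm + u1 mm * (-β) + u2 mm / 2 * (-β)^2 + u3 mm / 6 * (-β)^3)) := by ring
      rw [hXY]
      exact (abs_sub _ _).trans (by linarith)
    have hsm2 : sm = (u xi - u xm - 2*β*(u1 mm) - β^3/3 * u3 mm)/(2*β) := by
      rw [hsmd, hrmd, hdmd, hxixm]
      field_simp
      try ring
    rw [hsm2, abs_div, abs_of_pos (by linarith : (0:ℝ) < 2*β), div_le_iff₀ (by linarith)]
    calc |u xi - u xm - 2*β*(u1 mm) - β^3/3 * u3 mm| ≤ 2*(Ku4*β^4) := hnum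
      _ = Ku4 * β^3 * (2*β) := by ring
  -- sigma bounds
  have hσp : |σp| ≤ Ku3 * α^2 := by
    have e := tay2 hconv hu1 hu2 hbKu3 hiS hmpS
    rw [hmpxi, habs_p] at e
    have : σp = u1 mp - (u1 xi + u2 xi * α) := by rw [hσpd]; ring
    rw [this]; exact e
  have hσm : |σm| ≤ Ku3 * β^2 := by
    have e := tay2 hconv hu1 hu2 hbKu3 hiS hmmS
    rw [hmmxi, abs_neg, habs_m] at e
    have : σm = u1 mm - (u1 xi + u2 xi * (-β)) := by rw [hσmd]; ring
    rw [this]; exact e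
  have hσtp : |σtp| ≤ Ku4 * α^3 := by
    have e := tay3 hconv hu1 hu2 hu3 hbKu4 hiS hmpS
    rw [hmpxi, habs_p] at e
    have : σtp = u1 mp - (u1 xi + u2 xi * α + u3 xi / 2 * α^2) := by
      rw [hσtpd, hσpd]; ring
    rw [this]; exact e
  have hσtm : |σtm| ≤ Ku4 * β^3 := by
    have e := tay3 hconv hu1 hu2 hu3 hbKu4 hiS hmmS
    rw [hmmxi, abs_neg, habs_m] at e
    have : σtm = u1 mm - (u1 xi + u2 xi * (-β) + u3 xi / 2 * (-β)^2) := by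
      rw [hσtmd, hσmd]; ring
    rw [this]; exact e
  -- rho/tau/pi bounds
  have hρp : |ρp| ≤ Ka3 * α^3 := by
    have e := tay3 hconv ha0 ha1 ha2 hbKa3 hiS hmpS
    rw [hmpxi, habs_p] at e
    have : ρp = a mp - (a xi + a1 xi * α + a2 xi / 2 * α^2) := by rw [hρpd]; ring
    rw [this]; exact e
  have hρm : |ρm| ≤ Ka3 * β^3 := by
    have e := tay3 hconv ha0 ha1 ha2 hbKa3 hiS hmmS
    rw [hmmxi, abs_neg, habs_m] at e
    have : ρm = a mm - (a xi + a1 xi * (-β) + a2 xi / 2 * (-β)^2) := by rw [hρmd]; ring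
    rw [this]; exact e
  have hτp : |τp| ≤ Ka2 * α^2 := by
    have e := tay2 hconv ha0 ha1 hbKa2 hiS hmpS
    rw [hmpxi, habs_p] at e
    have : τp = a mp - (a xi + a1 xi * α) := by rw [hτpd]; ring
    rw [this]; exact e
  have hτm : |τm| ≤ Ka2 * β^2 := by
    have e := tay2 hconv ha0 ha1 hbKa2 hiS hmmS
    rw [hmmxi, abs_neg, habs_m] at e
    have : τm = a mm - (a xi + a1 xi * (-β)) := by rw [hτmd]; ring
    rw [this]; exact e
  have hπp : |πp| ≤ M * α := by
    have e := tay1 hconv ha0 hMa1 hiS hmpS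
    rw [hmpxi, habs_p] at e
    rw [hπpd]; exact e
  have hπm : |πm| ≤ M * β := by
    have e := tay1 hconv ha0 hMa1 hiS hmmS
    rw [hmmxi, abs_neg, habs_m] at e
    rw [hπmd]; exact e
  have hwp : |u3 mp - u3 xi| ≤ Ku4 * α := by
    have e := tay1 hconv hu3 hbKu4 hiS hmpS
    rwa [hmpxi, habs_p] at e
  have hP3diff : |u3 mp - u3 mm| ≤ Ku4 * (α + β) := by
    have e := tay1 hconv hu3 hbKu4 hmmS hmpS
    rwa [hmpmm, abs_of_pos hab] at e
  have hAdiff : |a mp - a mm| ≤ M * (α + β) := by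
    have e := tay1 hconv ha0 hMa1 hmmS hmpS
    rwa [hmpmm, abs_of_pos hab] at e
  -- goal conversion
  have hg2 : deriv u xi = u1 xi := by
    rw [hu1f, iDW_nhds hSnh, iteratedDeriv_one]
  have hg3 : deriv a xi = a1 xi := by
    rw [ha1f, iDW_nhds hSnh, iteratedDeriv_one]
  have hg4 : iteratedDeriv 2 a xi = a2 xi := by rw [ha2f, iDW_nhds hSnh]
  have hg5 : iteratedDeriv 2 u xi = u2 xi := by rw [hu2f, iDW_nhds hSnh]
  have hg6 : iteratedDeriv 3 u xi = u3 xi := by rw [hu3f, iDW_nhds hSnh]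
  have hg1 : deriv (fun x => a x * deriv u x) xi = a1 xi * u1 xi + a xi * u2 xi := by
    have hev : (fun x => a x * deriv u x) =ᶠ[nhds xi] (fun x => a x * u1 x) := by
      filter_upwards [Ioo_mem_nhds hmi hip] with y hy
      rw [hu1f, iDW_nhds (Icc_mem_nhds hy.1 hy.2), iteratedDeriv_one]
    rw [hev.deriv_eq]
    have hda : DifferentiableAt ℝ a xi :=
      ((ha.differentiableOn (by norm_num)) xi hiS).differentiableAt hSnh
    have hdu1 : DifferentiableAt ℝ u1 xi := by
      rw [hu1f]
      exact ((hu.differentiableOn_iteratedDerivWithin (by norm_num) hUD) xi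
        hiS).differentiableAt hSnh
    rw [deriv_fun_mul hda hdu1]
    congr 1
    · rw [← hg3]
    · congr 1
      rw [hu2f, hu1f, show (2:ℕ) = 1+1 from rfl, iteratedDerivWithin_succ (n := 1)]
      exact (derivWithin_of_mem_nhds hSnh).symm
  rw [hg1, hg2, hg3, hg4, hg5, hg6]
  have hsum : (xi - xm + (xp - xi))/2 = α + β := by rw [hαd, hβd]; ring
  rw [hsum]
  have habd : |xp - xi - (xi - xm)| = 2 * |α - β| := by
    rw [show xp - xi - (xi - xm) = 2*(α - β) by rw [hαd, hβd]; ring, abs_mul]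
    norm_num
  rw [habd]
  -- set up N and identities
  have hne1 : xp - xi ≠ 0 := ne_of_gt (by linarith)
  have hne2 : xi - xm ≠ 0 := ne_of_gt (by linarith)
  have hne3 : α + β ≠ 0 := ne_of_gt hab
  set N := a mp * dp - a mm * dm - (α+β)*(a1 xi * u1 xi + a xi * u2 xi) with hNd
  have hLT : a1 xi * u1 xi + a xi * u2 xi -
      (a mp * (u xp - u xi) / (xp - xi) - a mm * (u xi - u xm) / (xi - xm)) / (α + β)
      = -(N/(α+β)) := by
    rw [hNd, hdpd, hdmd]
    field_simp
    ring
  rw [hLT, abs_neg, abs_div, abs_of_pos hab, div_le_iff₀ hab]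
  set X1 := (α^2 - β^2) * (a2 xi * u1 xi/2 + a1 xi * u2 xi) with hX1d
  set X2 := (ρp - ρm) * u1 xi with hX2d
  set X3 := (α*τp + β*τm) * u2 xi with hX3d
  set X4 := a mp * (σp + rp) with hX4d
  set X5 := a mm * (σm + rm) with hX5d
  have hNid : N = X1 + X2 + X3 + (X4 - X5) := by
    rw [hNd, hX1d, hX2d, hX3d, hX4d, hX5d, hρpd, hρmd, hτpd, hτmd, hσpd, hσmd, hrpd, hrmd]
    ring
  set Y4 := a mp * (σtp + sp) - a mm * (σtm + sm) with hY4d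
  set Y5 := (1/2) * ((α^2 - β^2) * a xi + α^2 * πp - β^2 * πm) * u3 xi with hY5d
  set Y6 := (1/6) * ((α^2 - β^2) * (a xi * u3 xi + πp * u3 mp + a xi * (u3 mp - u3 xi))
      + β^2 * (a mp * (u3 mp - u3 mm) + (a mp - a mm) * u3 mm)) with hY6d
  have hNid2 : N = X1 + X2 + X3 + (Y4 + Y5 + Y6) := by
    rw [hNd, hX1d, hX2d, hX3d, hY4d, hY5d, hY6d, hσtpd, hσtmd, hspd, hsmd, hπpd, hπmd,
      hρpd, hρmd, hτpd, hτmd, hσpd, hσmd, hrpd, hrmd]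
    ring
  set E := |a2 xi| * |u1 xi| + |a1 xi| * |u2 xi| + |a xi| * |u3 xi| with hEd
  have hEn : 0 ≤ E := by rw [hEd]; positivity
  have hdH : |α - β| ≤ H/2 := abs_le.mpr ⟨by linarith, by linarith⟩
  -- piece bounds (common)
  have hb1 : |X1| ≤ (α+β) * (|α-β| * E) := by
    have hinner : |a2 xi * u1 xi/2 + a1 xi * u2 xi| ≤ E := by
      have h1 := abs_add_le (a2 xi * u1 xi/2) (a1 xi * u2 xi)
      have h2 : |a2 xi * u1 xi / 2| ≤ |a2 xi| * |u1 xi| := by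
        rw [abs_div, abs_mul, abs_two]
        exact div_le_self (by positivity) one_le_two
      have h3 : |a1 xi * u2 xi| = |a1 xi| * |u2 xi| := abs_mul _ _
      have h4 : 0 ≤ |a xi| * |u3 xi| := by positivity
      rw [hEd]; linarith
    calc |X1| = (α+β) * |α-β| * |a2 xi * u1 xi/2 + a1 xi * u2 xi| := by
          rw [hX1d, show α^2 - β^2 = (α+β)*(α-β) by ring, abs_mul, abs_mul, abs_of_pos hab]
      _ ≤ (α+β) * |α-β| * E := by
          apply mul_le_mul_of_nonneg_left hinner (by positivity)
      _ = (α+β) * (|α-β| * E) := by ring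
  have hb2 : |X2| ≤ (α+β) * (Ka3 * H^2 * |u1 xi|) := by
    have hd : |ρp - ρm| ≤ Ka3*α^3 + Ka3*β^3 := (abs_sub _ _).trans (by linarith)
    have pα : α^3 ≤ (H/2)^3 := pow_le_pow_left₀ hα.le hαH 3
    have pβ : β^3 ≤ (H/2)^3 := pow_le_pow_left₀ hβ.le hβH 3
    calc |X2| = |ρp - ρm| * |u1 xi| := by rw [hX2d, abs_mul]
      _ ≤ (Ka3*α^3 + Ka3*β^3) * |u1 xi| := mul_le_mul_of_nonneg_right hd (abs_nonneg _)
      _ ≤ (Ka3*(H/2)^3 + Ka3*(H/2)^3) * |u1 xi| := by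
          apply mul_le_mul_of_nonneg_right _ (abs_nonneg _)
          have := mul_le_mul_of_nonneg_left pα hKa3n
          have := mul_le_mul_of_nonneg_left pβ hKa3n
          linarith
      _ = (H/2) * (Ka3 * (H^2/2) * |u1 xi|) := by ring
      _ ≤ (α+β) * (Ka3 * (H^2/2) * |u1 xi|) := by
          apply mul_le_mul_of_nonneg_right hHab
          have : (0:ℝ) ≤ H^2/2 := by positivity
          exact mul_nonneg (mul_nonneg hKa3n this) (abs_nonneg _)
      _ ≤ (α+β) * (Ka3 * H^2 * |u1 xi|) := by
          apply mul_le_mul_of_nonneg_left _ hab.le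
          apply mul_le_mul_of_nonneg_right _ (abs_nonneg _)
          have h := mul_le_mul_of_nonneg_left (show H^2/2 ≤ H^2 by linarith [sq_nonneg H]) hKa3n
          linarith
  have hb3 : |X3| ≤ (α+β) * (Ka2 * H^2 * |u2 xi|) := by
    have hd : |α*τp + β*τm| ≤ α*(Ka2*α^2) + β*(Ka2*β^2) := by
      refine (abs_add_le _ _).trans ?_
      rw [abs_mul, abs_mul, habs_p, habs_m]
      exact add_le_add (mul_le_mul_of_nonneg_left hτp hα.le)
        (mul_le_mul_of_nonneg_left hτm hβ.le)
    have pα : α^3 ≤ (H/2)^3 := pow_le_pow_left₀ hα.le hαH 3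
    have pβ : β^3 ≤ (H/2)^3 := pow_le_pow_left₀ hβ.le hβH 3
    calc |X3| = |α*τp + β*τm| * |u2 xi| := by rw [hX3d, abs_mul]
      _ ≤ (Ka2*α^3 + Ka2*β^3) * |u2 xi| := by
          apply mul_le_mul_of_nonneg_right _ (abs_nonneg _)
          calc |α*τp + β*τm| ≤ α*(Ka2*α^2) + β*(Ka2*β^2) := hd
            _ = Ka2*α^3 + Ka2*β^3 := by ring
      _ ≤ (Ka2*(H/2)^3 + Ka2*(H/2)^3) * |u2 xi| := by
          apply mul_le_mul_of_nonneg_right _ (abs_nonneg _)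
          have := mul_le_mul_of_nonneg_left pα hKa2n
          have := mul_le_mul_of_nonneg_left pβ hKa2n
          linarith
      _ = (H/2) * (Ka2 * (H^2/2) * |u2 xi|) := by ring
      _ ≤ (α+β) * (Ka2 * (H^2/2) * |u2 xi|) := by
          apply mul_le_mul_of_nonneg_right hHab
          have : (0:ℝ) ≤ H^2/2 := by positivity
          exact mul_nonneg (mul_nonneg hKa2n this) (abs_nonneg _)
      _ ≤ (α+β) * (Ka2 * H^2 * |u2 xi|) := by
          apply mul_le_mul_of_nonneg_left _ hab.le
          apply mul_le_mul_of_nonneg_right _ (abs_nonneg _)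
          have h := mul_le_mul_of_nonneg_left (show H^2/2 ≤ H^2 by linarith [sq_nonneg H]) hKa2n
          linarith
  -- branch A piece
  have hb4A : |X4| + |X5| ≤ (α+β) * (2*M*Ku3*H) := by
    have h4 : |X4| ≤ M*(Ku3*α^2 + Ku3*α^2) := by
      rw [hX4d, abs_mul]
      exact mul_le_mul (hMa0 mp hmpS) ((abs_add_le _ _).trans (add_le_add hσp hrp))
        (abs_nonneg _) hM0
    have h5 : |X5| ≤ M*(Ku3*β^2 + Ku3*β^2) := by
      rw [hX5d, abs_mul]
      exact mul_le_mul (hMa0 mm hmmS) ((abs_add_le _ _).trans (add_le_add hσm hrm))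
        (abs_nonneg _) hM0
    have pα : α^2 ≤ (H/2)^2 := pow_le_pow_left₀ hα.le hαH 2
    have pβ : β^2 ≤ (H/2)^2 := pow_le_pow_left₀ hβ.le hβH 2
    have q1 := mul_le_mul_of_nonneg_left pα hKu3n
    have q2 := mul_le_mul_of_nonneg_left pβ hKu3n
    have q3 := mul_le_mul_of_nonneg_left
      (show Ku3*α^2 + Ku3*α^2 ≤ Ku3*(H/2)^2 + Ku3*(H/2)^2 by linarith) hM0
    have q4 := mul_le_mul_of_nonneg_left
      (show Ku3*β^2 + Ku3*β^2 ≤ Ku3*(H/2)^2 + Ku3*(H/2)^2 by linarith) hM0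
    have q5 : M*(Ku3*(H/2)^2 + Ku3*(H/2)^2) + M*(Ku3*(H/2)^2 + Ku3*(H/2)^2)
        = (H/2) * (2*M*Ku3*H) := by ring
    have q6 : 0 ≤ 2*M*Ku3*H :=
      mul_nonneg (mul_nonneg (mul_nonneg (by norm_num) hM0) hKu3n) hH.le
    have q7 := mul_le_mul_of_nonneg_right hHab q6
    linarith
  -- branch B pieces
  have hb4B : |Y4| ≤ (α+β) * (M*Ku4*H^2) := by
    have h4 : |a mp * (σtp + sp)| ≤ M*(Ku4*α^3 + Ku4*α^3) := by
      rw [abs_mul]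
      exact mul_le_mul (hMa0 mp hmpS) ((abs_add_le _ _).trans (add_le_add hσtp hsp))
        (abs_nonneg _) hM0
    have h5 : |a mm * (σtm + sm)| ≤ M*(Ku4*β^3 + Ku4*β^3) := by
      rw [abs_mul]
      exact mul_le_mul (hMa0 mm hmmS) ((abs_add_le _ _).trans (add_le_add hσtm hsm))
        (abs_nonneg _) hM0
    have pα : α^3 ≤ (H/2)^3 := pow_le_pow_left₀ hα.le hαH 3
    have pβ : β^3 ≤ (H/2)^3 := pow_le_pow_left₀ hβ.le hβH 3
    have q1 := mul_le_mul_of_nonneg_left pα hKu4n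
    have q2 := mul_le_mul_of_nonneg_left pβ hKu4n
    have q3 := mul_le_mul_of_nonneg_left
      (show Ku4*α^3 + Ku4*α^3 ≤ Ku4*(H/2)^3 + Ku4*(H/2)^3 by linarith) hM0
    have q4 := mul_le_mul_of_nonneg_left
      (show Ku4*β^3 + Ku4*β^3 ≤ Ku4*(H/2)^3 + Ku4*(H/2)^3 by linarith) hM0
    have q5 : M*(Ku4*(H/2)^3 + Ku4*(H/2)^3) + M*(Ku4*(H/2)^3 + Ku4*(H/2)^3)
        = (H/2) * (M*Ku4*H^2) := by ring
    have q6 : 0 ≤ M*Ku4*H^2 := mul_nonneg (mul_nonneg hM0 hKu4n) (sq_nonneg H)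
    have q7 := mul_le_mul_of_nonneg_right hHab q6
    have t0 : |Y4| ≤ |a mp * (σtp + sp)| + |a mm * (σtm + sm)| := by
      rw [hY4d]; exact abs_sub _ _
    linarith
  have hU3b : |u3 xi| ≤ Ku3 := hbKu3 xi hiS
  have hb5 : |Y5| ≤ (α+β) * (|α-β| *(|a xi| *|u3 xi|)/2 + M*Ku3*H^2) := by
    have hin : |(α^2-β^2)*a xi + α^2*πp - β^2*πm|
        ≤ (α+β)*|α-β| *|a xi| + α^2*(M*α) + β^2*(M*β) := by
      refine (abs_sub _ _).trans (add_le_add ((abs_add_le _ _).trans (add_le_add ?_ ?_)) ?_)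
      · rw [abs_mul, show α^2 - β^2 = (α+β)*(α-β) by ring, abs_mul, abs_of_pos hab]
      · rw [abs_mul, abs_of_nonneg (sq_nonneg α)]
        exact mul_le_mul_of_nonneg_left hπp (sq_nonneg α)
      · rw [abs_mul, abs_of_nonneg (sq_nonneg β)]
        exact mul_le_mul_of_nonneg_left hπm (sq_nonneg β)
    have pα : α^3 ≤ (H/2)^3 := pow_le_pow_left₀ hα.le hαH 3
    have pβ : β^3 ≤ (H/2)^3 := pow_le_pow_left₀ hβ.le hβH 3
    calc |Y5| = 1/2 * |(α^2-β^2)*a xi + α^2*πp - β^2*πm| * |u3 xi| := by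
          rw [hY5d, abs_mul, abs_mul, abs_of_pos (by norm_num : (0:ℝ) < 1/2)]
      _ ≤ 1/2 * ((α+β)*|α-β| *|a xi| + α^2*(M*α) + β^2*(M*β)) * |u3 xi| := by
          apply mul_le_mul_of_nonneg_right _ (abs_nonneg _)
          exact mul_le_mul_of_nonneg_left hin (by norm_num)
      _ = (α+β)*(|α-β| *(|a xi| *|u3 xi|)/2) + 1/2*(α^3*M + β^3*M)*|u3 xi| := by ring
      _ ≤ (α+β)*(|α-β| *(|a xi| *|u3 xi|)/2) + 1/2*((H/2)^3*M + (H/2)^3*M)*Ku3 := by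
          apply add_le_add le_rfl
          have hx : 1/2*(α^3*M + β^3*M) ≤ 1/2*((H/2)^3*M + (H/2)^3*M) := by
            have h1 := mul_le_mul_of_nonneg_right pα hM0
            have h2 := mul_le_mul_of_nonneg_right pβ hM0
            linarith
          have hy : 0 ≤ 1/2*(α^3*M + β^3*M) := by
            have h1 := mul_nonneg (pow_nonneg hα.le 3) hM0
            have h2 := mul_nonneg (pow_nonneg hβ.le 3) hM0
            linarith
          calc 1/2*(α^3*M + β^3*M)*|u3 xi| ≤ 1/2*(α^3*M+β^3*M)*Ku3 :=
                mul_le_mul_of_nonneg_left hU3b hy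
            _ ≤ 1/2*((H/2)^3*M+(H/2)^3*M)*Ku3 := mul_le_mul_of_nonneg_right hx hKu3n
      _ ≤ (α+β)*(|α-β| *(|a xi| *|u3 xi|)/2) + (α+β)*(M*Ku3*H^2) := by
          apply add_le_add le_rfl
          have h8 : 1/2*((H/2)^3*M + (H/2)^3*M)*Ku3 = (H/2)*(M*Ku3*H^2/4) := by ring
          rw [h8]
          have hq : 0 ≤ M*Ku3*H^2/4 := by
            have := mul_nonneg (mul_nonneg hM0 hKu3n) (sq_nonneg H)
            linarith
          calc (H/2)*(M*Ku3*H^2/4) ≤ (α+β)*(M*Ku3*H^2/4) :=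
                mul_le_mul_of_nonneg_right hHab hq
            _ ≤ (α+β)*(M*Ku3*H^2) := by
                apply mul_le_mul_of_nonneg_left _ hab.le
                have := mul_nonneg (mul_nonneg hM0 hKu3n) (sq_nonneg H)
                linarith
      _ = (α+β)*(|α-β| *(|a xi| *|u3 xi|)/2 + M*Ku3*H^2) := by ring
  have hb6 : |Y6| ≤ (α+β) * (|α-β| *(|a xi| *|u3 xi|)/6 + M*H^2*(Ku3+Ku4)) := by
    have i1 : |(α^2-β^2) * (a xi * u3 xi + πp * u3 mp + a xi * (u3 mp - u3 xi))|
        ≤ (α+β) * (|α-β| * (|a xi| *|u3 xi| + M*α*Ku3 + M*(Ku4*α))) := by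
      rw [abs_mul, show α^2-β^2 = (α+β)*(α-β) by ring, abs_mul, abs_of_pos hab, mul_assoc]
      apply mul_le_mul_of_nonneg_left _ hab.le
      apply mul_le_mul_of_nonneg_left _ (abs_nonneg _)
      refine (abs_add_le _ _).trans (add_le_add ((abs_add_le _ _).trans (add_le_add ?_ ?_)) ?_)
      · rw [abs_mul]
      · rw [abs_mul]
        have := mul_le_mul hπp (hbKu3 mp hmpS) (abs_nonneg _) (mul_nonneg hM0 hα.le)
        calc |πp| * |u3 mp| ≤ (M*α)*Ku3 := this
          _ = M*α*Ku3 := by ring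
      · rw [abs_mul]
        exact mul_le_mul (hMa0 xi hiS) hwp (abs_nonneg _) hM0
    have i2 : |β^2 * (a mp * (u3 mp - u3 mm) + (a mp - a mm) * u3 mm)|
        ≤ β^2 * (M*(Ku4*(α+β)) + M*(α+β)*Ku3) := by
      rw [abs_mul, abs_of_nonneg (sq_nonneg β)]
      apply mul_le_mul_of_nonneg_left _ (sq_nonneg β)
      refine (abs_add_le _ _).trans (add_le_add ?_ ?_)
      · rw [abs_mul]
        exact mul_le_mul (hMa0 mp hmpS) hP3diff (abs_nonneg _) hM0
      · rw [abs_mul]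
        have := mul_le_mul hAdiff (hbKu3 mm hmmS) (abs_nonneg _) (mul_nonneg hM0 hab.le)
        calc |a mp - a mm| * |u3 mm| ≤ (M*(α+β))*Ku3 := this
          _ = M*(α+β)*Ku3 := by ring
    have t0 : |Y6| ≤ 1/6 * ((α+β) * (|α-β| * (|a xi| *|u3 xi| + M*α*Ku3 + M*(Ku4*α)))
        + β^2 * (M*(Ku4*(α+β)) + M*(α+β)*Ku3)) := by
      rw [hY6d, abs_mul, abs_of_pos (by norm_num : (0:ℝ) < 1/6)]
      apply mul_le_mul_of_nonneg_left _ (by norm_num)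
      exact (abs_add_le _ _).trans (add_le_add i1 i2)
    have e0 : 1/6 * ((α+β) * (|α-β| * (|a xi| *|u3 xi| + M*α*Ku3 + M*(Ku4*α)))
        + β^2 * (M*(Ku4*(α+β)) + M*(α+β)*Ku3))
        = (α+β) * (|α-β| *(|a xi| *|u3 xi|)/6
          + (|α-β| *(M*α*Ku3 + M*(Ku4*α)) + β^2*(M*(Ku4+Ku3)))/6) := by ring
    have hrest : (|α-β| *(M*α*Ku3 + M*(Ku4*α)) + β^2*(M*(Ku4+Ku3)))/6
        ≤ M*H^2*(Ku3+Ku4) := by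
      have k0a : M*α*Ku3 ≤ M*(H/2)*Ku3 :=
        mul_le_mul_of_nonneg_right (mul_le_mul_of_nonneg_left hαH hM0) hKu3n
      have k0b : M*(Ku4*α) ≤ M*(Ku4*(H/2)) := by
        apply mul_le_mul_of_nonneg_left _ hM0
        exact mul_le_mul_of_nonneg_left hαH hKu4n
      have kna : 0 ≤ M*(H/2)*Ku3 + M*(Ku4*(H/2)) := by
        have h1 : 0 ≤ M*(H/2)*Ku3 := mul_nonneg (mul_nonneg hM0 (by linarith)) hKu3n
        have h2 : 0 ≤ M*(Ku4*(H/2)) := mul_nonneg hM0 (mul_nonneg hKu4n (by linarith))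
        linarith
      have k1 : |α-β| *(M*α*Ku3 + M*(Ku4*α)) ≤ (H/2)*(M*(H/2)*Ku3 + M*(Ku4*(H/2))) := by
        apply mul_le_mul hdH (by linarith) _ (by linarith)
        have h1 : 0 ≤ M*α*Ku3 := mul_nonneg (mul_nonneg hM0 hα.le) hKu3n
        have h2 : 0 ≤ M*(Ku4*α) := mul_nonneg hM0 (mul_nonneg hKu4n hα.le)
        linarith
      have k3 : β^2*(M*(Ku4+Ku3)) ≤ (H/2)^2*(M*(Ku4+Ku3)) := by
        apply mul_le_mul_of_nonneg_right (pow_le_pow_left₀ hβ.le hβH 2)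
        exact mul_nonneg hM0 (by linarith)
      have m3 : 0 ≤ M*H^2*Ku3 := mul_nonneg (mul_nonneg hM0 (sq_nonneg H)) hKu3n
      have m4 : 0 ≤ M*H^2*Ku4 := mul_nonneg (mul_nonneg hM0 (sq_nonneg H)) hKu4n
      linarith [k1, k3, m3, m4]
    calc |Y6| ≤ 1/6 * ((α+β) * (|α-β| * (|a xi| *|u3 xi| + M*α*Ku3 + M*(Ku4*α)))
        + β^2 * (M*(Ku4*(α+β)) + M*(α+β)*Ku3)) := t0
      _ = (α+β) * (|α-β| *(|a xi| *|u3 xi|)/6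
          + (|α-β| *(M*α*Ku3 + M*(Ku4*α)) + β^2*(M*(Ku4+Ku3)))/6) := e0
      _ ≤ (α+β) * (|α-β| *(|a xi| *|u3 xi|)/6 + M*H^2*(Ku3+Ku4)) := by
          apply mul_le_mul_of_nonneg_left _ hab.le
          exact add_le_add le_rfl hrest
  clear_value E Y6 Y5 Y4 X5 X4 X3 X2 X1 N πm πp τm τp ρm ρp σtm σtp σm σp sm sp rm rp dm dp mm mp H β α Ku4 Ku3 Ka3 Ka2 a3 a2 a1 u4 u3 u2 u1 S
  rcases le_total Ku3 (H*(Ku3+Ku4)) with hmn | hmn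
  · rw [min_eq_left hmn]
    have hNA : |N| ≤ (α+β) * (|α-β| * E + Ka3*H^2*|u1 xi| + Ka2*H^2*|u2 xi| + 2*M*Ku3*H) := by
      have t0 : |N| ≤ |X1| + |X2| + |X3| + (|X4| + |X5|) := by
        rw [hNid]
        have a1' := abs_add_le (X1 + X2 + X3) (X4 - X5)
        have a2' := abs_add_le (X1 + X2) X3
        have a3' := abs_add_le X1 X2
        have a4' := abs_sub X4 X5
        linarith
      have e1 : (α+β)*(|α-β| * E) + (α+β)*(Ka3*H^2*|u1 xi|) + (α+β)*(Ka2*H^2*|u2 xi|)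
          + (α+β)*(2*M*Ku3*H)
          = (α+β) * (|α-β| * E + Ka3*H^2*|u1 xi| + Ka2*H^2*|u2 xi| + 2*M*Ku3*H) := by ring
      linarith [hb1, hb2, hb3, hb4A]
    have hGle : |α-β| * E + Ka3*H^2*|u1 xi| + Ka2*H^2*|u2 xi| + 2*M*Ku3*H
        ≤ 512*(|M|+1) * (2*|α-β| * E + H^2*(Ka3*|u1 xi| + Ka2*|u2 xi|) + H*Ku3) := by
      have n1 : 0 ≤ |α-β| * E := mul_nonneg (abs_nonneg _) hEn
      have n2 : 0 ≤ Ka3*H^2*|u1 xi| :=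
        mul_nonneg (mul_nonneg hKa3n (sq_nonneg H)) (abs_nonneg _)
      have n3 : 0 ≤ Ka2*H^2*|u2 xi| :=
        mul_nonneg (mul_nonneg hKa2n (sq_nonneg H)) (abs_nonneg _)
      have n4 : 0 ≤ H*Ku3 := mul_nonneg hH.le hKu3n
      have d1 : 0 ≤ |M| * (|α-β| * E) := mul_nonneg (abs_nonneg M) n1
      have d2 : 0 ≤ |M| * (Ka3*H^2*|u1 xi|) := mul_nonneg (abs_nonneg M) n2
      have d3 : 0 ≤ |M| * (Ka2*H^2*|u2 xi|) := mul_nonneg (abs_nonneg M) n3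
      have d4 : 0 ≤ (|M|-M)*(H*Ku3) := mul_nonneg (by linarith [le_abs_self M]) n4
      have d5 : 0 ≤ |M| * (H*Ku3) := mul_nonneg (abs_nonneg M) n4
      linarith
    calc |N| ≤ (α+β) * (|α-β| * E + Ka3*H^2*|u1 xi| + Ka2*H^2*|u2 xi| + 2*M*Ku3*H) := hNA
      _ ≤ (α+β) * (512*(|M|+1) * (2*|α-β| * E + H^2*(Ka3*|u1 xi| + Ka2*|u2 xi|) + H*Ku3)) :=
          mul_le_mul_of_nonneg_left hGle hab.le
      _ = 512*(|M|+1) * (2*|α-β| * E + H^2*(Ka3*|u1 xi| + Ka2*|u2 xi|) + H*Ku3) * (α+β) := by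
          ring
  · rw [min_eq_right hmn]
    have hNB : |N| ≤ (α+β) * (|α-β| * E + Ka3*H^2*|u1 xi| + Ka2*H^2*|u2 xi|
        + (M*Ku4*H^2 + (|α-β| * (|a xi| * |u3 xi|)/2 + M*Ku3*H^2)
          + (|α-β| * (|a xi| * |u3 xi|)/6 + M*H^2*(Ku3+Ku4)))) := by
      have t0 : |N| ≤ |X1| + |X2| + |X3| + (|Y4| + |Y5| + |Y6|) := by
        rw [hNid2]
        have a1' := abs_add_le (X1 + X2 + X3) (Y4 + Y5 + Y6)
        have a2' := abs_add_le (X1 + X2) X3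
        have a3' := abs_add_le X1 X2
        have a4' := abs_add_le (Y4 + Y5) Y6
        have a5' := abs_add_le Y4 Y5
        linarith
      have e1 : (α+β)*(|α-β| * E) + (α+β)*(Ka3*H^2*|u1 xi|) + (α+β)*(Ka2*H^2*|u2 xi|)
          + ((α+β)*(M*Ku4*H^2) + (α+β)*(|α-β| * (|a xi| * |u3 xi|)/2 + M*Ku3*H^2)
            + (α+β)*(|α-β| * (|a xi| * |u3 xi|)/6 + M*H^2*(Ku3+Ku4)))
          = (α+β) * (|α-β| * E + Ka3*H^2*|u1 xi| + Ka2*H^2*|u2 xi|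
            + (M*Ku4*H^2 + (|α-β| * (|a xi| * |u3 xi|)/2 + M*Ku3*H^2)
              + (|α-β| * (|a xi| * |u3 xi|)/6 + M*H^2*(Ku3+Ku4)))) := by ring
      calc |N| ≤ |X1| + |X2| + |X3| + (|Y4| + |Y5| + |Y6|) := t0
        _ ≤ (α+β)*(|α-β| * E) + (α+β)*(Ka3*H^2*|u1 xi|) + (α+β)*(Ka2*H^2*|u2 xi|)
          + ((α+β)*(M*Ku4*H^2) + (α+β)*(|α-β| * (|a xi| * |u3 xi|)/2 + M*Ku3*H^2)
            + (α+β)*(|α-β| * (|a xi| * |u3 xi|)/6 + M*H^2*(Ku3+Ku4))) :=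
            add_le_add (add_le_add (add_le_add hb1 hb2) hb3)
              (add_le_add (add_le_add hb4B hb5) hb6)
        _ = (α+β) * (|α-β| * E + Ka3*H^2*|u1 xi| + Ka2*H^2*|u2 xi|
            + (M*Ku4*H^2 + (|α-β| * (|a xi| * |u3 xi|)/2 + M*Ku3*H^2)
              + (|α-β| * (|a xi| * |u3 xi|)/6 + M*H^2*(Ku3+Ku4)))) := e1
    have hE3 : |a xi| * |u3 xi| ≤ E := by
      rw [hEd]
      have h1 : 0 ≤ |a2 xi| * |u1 xi| := mul_nonneg (abs_nonneg _) (abs_nonneg _)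
      have h2 : 0 ≤ |a1 xi| * |u2 xi| := mul_nonneg (abs_nonneg _) (abs_nonneg _)
      linarith
    have hGle : |α-β| * E + Ka3*H^2*|u1 xi| + Ka2*H^2*|u2 xi|
        + (M*Ku4*H^2 + (|α-β| * (|a xi| * |u3 xi|)/2 + M*Ku3*H^2)
          + (|α-β| * (|a xi| * |u3 xi|)/6 + M*H^2*(Ku3+Ku4)))
        ≤ 512*(|M|+1) * (2*|α-β| * E + H^2*(Ka3*|u1 xi| + Ka2*|u2 xi|)
            + H*(H*(Ku3+Ku4))) := by
      have n1 : 0 ≤ |α-β| * E := mul_nonneg (abs_nonneg _) hEn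
      have n2 : 0 ≤ Ka3*H^2*|u1 xi| :=
        mul_nonneg (mul_nonneg hKa3n (sq_nonneg H)) (abs_nonneg _)
      have n3 : 0 ≤ Ka2*H^2*|u2 xi| :=
        mul_nonneg (mul_nonneg hKa2n (sq_nonneg H)) (abs_nonneg _)
      have n4 : 0 ≤ H^2*Ku3 := mul_nonneg (sq_nonneg H) hKu3n
      have n5 : 0 ≤ H^2*Ku4 := mul_nonneg (sq_nonneg H) hKu4n
      have d1 : 0 ≤ |M| * (|α-β| * E) := mul_nonneg (abs_nonneg M) n1
      have d2 : 0 ≤ |M| * (Ka3*H^2*|u1 xi|) := mul_nonneg (abs_nonneg M) n2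
      have d3 : 0 ≤ |M| * (Ka2*H^2*|u2 xi|) := mul_nonneg (abs_nonneg M) n3
      have d4 : 0 ≤ (|M|-M)*(H^2*Ku3) := mul_nonneg (by linarith [le_abs_self M]) n4
      have d5 : 0 ≤ (|M|-M)*(H^2*Ku4) := mul_nonneg (by linarith [le_abs_self M]) n5
      have d6 : 0 ≤ |M| * (H^2*Ku3) := mul_nonneg (abs_nonneg M) n4
      have d7 : 0 ≤ |M| * (H^2*Ku4) := mul_nonneg (abs_nonneg M) n5
      have hE3' : |α-β| * (|a xi| * |u3 xi|) ≤ |α-β| * E :=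
        mul_le_mul_of_nonneg_left hE3 (abs_nonneg _)
      linarith only [hE3', n1, n2, n3, n4, n5, d1, d2, d3, d4, d5, d6, d7]
    calc |N| ≤ (α+β) * (|α-β| * E + Ka3*H^2*|u1 xi| + Ka2*H^2*|u2 xi|
        + (M*Ku4*H^2 + (|α-β| * (|a xi| * |u3 xi|)/2 + M*Ku3*H^2)
          + (|α-β| * (|a xi| * |u3 xi|)/6 + M*H^2*(Ku3+Ku4)))) := hNB
      _ ≤ (α+β) * (512*(|M|+1) * (2*|α-β| * E + H^2*(Ka3*|u1 xi| + Ka2*|u2 xi|)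
            + H*(H*(Ku3+Ku4)))) := mul_le_mul_of_nonneg_left hGle hab.le
      _ = 512*(|M|+1) * (2*|α-β| * E + H^2*(Ka3*|u1 xi| + Ka2*|u2 xi|)
            + H*(H*(Ku3+Ku4))) * (α+β) := by ring
end

section
/- Let φ, ψ : ℝ → ℝ be three times continuously differentiable with τ(t) := √(φ'(t)² + ψ'(t)²) > 0, and set n₁ := −ψ'/τ, n₂ := φ'/τ, κ := (φ'ψ'' − ψ'φ'')/τ³. Define the coordinate map F(r,t) := (φ(t) + r·n₁(t), ψ(t) + r·n₂(t)), and the functions η(r,t) := 1 − κ(t)·r and ζ(r,t) := 1/(τ(t)·η(r,t)). Fix (r₀,t₀) with |κ(t₀)·r₀| < 1 and let u be a real-valued function that is twice continuously differentiable in a neighbourhood of F(r₀,t₀). Then, writing ũ := u ∘ F, the Laplacian of u satisfies Δu(F(r₀,t₀)) = [ η^{−1}·∂/∂r( η·∂ũ/∂r ) + ζ·∂/∂t( ζ·∂ũ/∂t ) ](r₀,t₀). -/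
/-- Speed `τ = √(φ'² + ψ'²)` of the boundary parameterization. -/
noncomputable def speedTau (φ ψ : ℝ → ℝ) (t : ℝ) : ℝ :=
  Real.sqrt ((deriv φ t) ^ 2 + (deriv ψ t) ^ 2)

/-- First component `n₁ = -ψ'/τ` of the unit normal. -/
noncomputable def normal1 (φ ψ : ℝ → ℝ) (t : ℝ) : ℝ :=
  -deriv ψ t / speedTau φ ψ t

/-- Second component `n₂ = φ'/τ` of the unit normal. -/
noncomputable def normal2 (φ ψ : ℝ → ℝ) (t : ℝ) : ℝ :=
  deriv φ t / speedTau φ ψ t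

/-- Signed curvature `κ = (φ'ψ'' - ψ'φ'')/τ³`. -/
noncomputable def curv (φ ψ : ℝ → ℝ) (t : ℝ) : ℝ :=
  (deriv φ t * deriv (deriv ψ) t - deriv ψ t * deriv (deriv φ) t) / (speedTau φ ψ t) ^ 3

/-- Boundary-fitted coordinate map `F(r,t) = (φ(t) + r n₁(t), ψ(t) + r n₂(t))`. -/
noncomputable def coordMap (φ ψ : ℝ → ℝ) (p : ℝ × ℝ) : ℝ × ℝ :=
  (φ p.2 + p.1 * normal1 φ ψ p.2, ψ p.2 + p.1 * normal2 φ ψ p.2)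

/-- `ζ(r,t) = 1/(τ(t)·(1 - κ(t)r))`. -/
noncomputable def zetaFn (φ ψ : ℝ → ℝ) (r t : ℝ) : ℝ :=
  1 / (speedTau φ ψ t * (1 - curv φ ψ t * r))

/- ======================= auxiliary lemmas ======================= -/

lemma clm_eval (L : ℝ×ℝ →L[ℝ] ℝ) (x y : ℝ) : L (x,y) = x * L (1,0) + y * L (0,1) := by
  have h : (x,y) = x • ((1:ℝ),(0:ℝ)) + y • ((0:ℝ),(1:ℝ)) := by simp [Prod.ext_iff]
  rw [h, map_add, map_smul, map_smul, smul_eq_mul, smul_eq_mul]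

lemma contDiff_deriv3 (φ : ℝ → ℝ) (hφ : ContDiff ℝ 3 φ) : ContDiff ℝ 2 (deriv φ) := by
  have h : ContDiff ℝ ((2:ℕ)+1 : ℕ) φ := by exact_mod_cast hφ
  exact ((contDiff_succ_iff_deriv).mp h).2.2

section aux
variable (φ ψ : ℝ → ℝ) (hφ : ContDiff ℝ 3 φ) (hψ : ContDiff ℝ 3 ψ)
  (hτ : ∀ s, 0 < speedTau φ ψ s)

omit hφ hψ hτ in
lemma tau_sq (s : ℝ) : (speedTau φ ψ s) ^ 2 = (deriv φ s)^2 + (deriv ψ s)^2 :=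
  Real.sq_sqrt (by positivity)

include hφ hψ hτ

lemma hasDerivAt_tau (s : ℝ) :
    HasDerivAt (speedTau φ ψ)
      ((deriv φ s * deriv (deriv φ) s + deriv ψ s * deriv (deriv ψ) s) / speedTau φ ψ s) s := by
  have hdφ := contDiff_deriv3 φ hφ
  have hdψ := contDiff_deriv3 ψ hψ
  have h1 : HasDerivAt (fun t => (deriv φ t)^2 + (deriv ψ t)^2)
      (2 * deriv φ s * deriv (deriv φ) s + 2 * deriv ψ s * deriv (deriv ψ) s) s := by
    have a1 : HasDerivAt (deriv φ) (deriv (deriv φ) s) s :=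
      (hdφ.differentiable (by norm_num) s).hasDerivAt
    have a2 : HasDerivAt (deriv ψ) (deriv (deriv ψ) s) s :=
      (hdψ.differentiable (by norm_num) s).hasDerivAt
    have := ((a1.pow 2).add (a2.pow 2))
    refine this.congr_deriv (Eq.symm ?_)
    ring
  have hx : (deriv φ s)^2 + (deriv ψ s)^2 ≠ 0 := by
    have h0 := hτ s
    have h2 := tau_sq φ ψ s
    nlinarith
  have := (Real.hasDerivAt_sqrt hx).comp s h1
  refine this.congr_deriv (Eq.symm ?_)
  show _ = 1 / (2 * speedTau φ ψ s) * _
  have hne : speedTau φ ψ s ≠ 0 := (hτ s).ne'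
  field_simp

lemma hasDerivAt_normal1 (s : ℝ) :
    HasDerivAt (normal1 φ ψ) (-(curv φ ψ s) * deriv φ s) s := by
  have hdψ := contDiff_deriv3 ψ hψ
  have a2 : HasDerivAt (deriv ψ) (deriv (deriv ψ) s) s :=
    (hdψ.differentiable (by norm_num) s).hasDerivAt
  have hτ0 : speedTau φ ψ s ≠ 0 := (hτ s).ne'
  have h := (a2.neg.div (hasDerivAt_tau φ ψ hφ hψ hτ s) hτ0)
  refine h.congr_deriv (Eq.symm ?_)
  have h2 := tau_sq φ ψ s
  unfold curv
  field_simp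
  simp only [Pi.neg_apply]
  linear_combination (deriv (deriv ψ) s) * h2

lemma hasDerivAt_normal2 (s : ℝ) :
    HasDerivAt (normal2 φ ψ) (-(curv φ ψ s) * deriv ψ s) s := by
  have hdφ := contDiff_deriv3 φ hφ
  have a1 : HasDerivAt (deriv φ) (deriv (deriv φ) s) s :=
    (hdφ.differentiable (by norm_num) s).hasDerivAt
  have hτ0 : speedTau φ ψ s ≠ 0 := (hτ s).ne'
  have h := (a1.div (hasDerivAt_tau φ ψ hφ hψ hτ s) hτ0)
  refine h.congr_deriv (Eq.symm ?_)
  have h2 := tau_sq φ ψ s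
  unfold curv
  field_simp
  linear_combination (-(deriv (deriv φ) s)) * h2

lemma continuous_curv : Continuous (curv φ ψ) := by
  have c1 : Continuous (deriv φ) := (contDiff_deriv3 φ hφ).continuous
  have c2 : Continuous (deriv ψ) := (contDiff_deriv3 ψ hψ).continuous
  have c3 : Continuous (deriv (deriv φ)) :=
    (contDiff_deriv3 φ hφ).continuous_deriv (by norm_num)
  have c4 : Continuous (deriv (deriv ψ)) :=
    (contDiff_deriv3 ψ hψ).continuous_deriv (by norm_num)
  have cτ : Continuous (speedTau φ ψ) :=
    Real.continuous_sqrt.comp (((c1.pow 2).add (c2.pow 2)))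
  exact ((c1.mul c4).sub (c2.mul c3)).div (cτ.pow 3)
    (fun s => pow_ne_zero _ (hτ s).ne')

end aux

set_option maxHeartbeats 2000000 in
/-- Transformation of the Laplacian to boundary-fitted coordinates:
`Δu = η⁻¹ ∂_r(η ∂_r ũ) + ζ ∂_t(ζ ∂_t ũ)`, with `η = 1 - κr`, `ζ = 1/(τη)`. -/
theorem stmt10 (φ ψ : ℝ → ℝ) (hφ : ContDiff ℝ 3 φ) (hψ : ContDiff ℝ 3 ψ)
    (hτ : ∀ s, 0 < speedTau φ ψ s)
    (r₀ t₀ : ℝ) (hη : |curv φ ψ t₀ * r₀| < 1)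
    (u : ℝ × ℝ → ℝ) (hu : ContDiffAt ℝ 2 u (coordMap φ ψ (r₀, t₀))) :
    pderivXX u (coordMap φ ψ (r₀, t₀)) + pderivYY u (coordMap φ ψ (r₀, t₀)) =
      (1 - curv φ ψ t₀ * r₀)⁻¹ *
        deriv (fun s => (1 - curv φ ψ t₀ * s) *
          deriv (fun s' => u (coordMap φ ψ (s', t₀))) s) r₀ +
      zetaFn φ ψ r₀ t₀ *
        deriv (fun s => zetaFn φ ψ r₀ s *
          deriv (fun s' => u (coordMap φ ψ (r₀, s'))) s) t₀ := by
  set a := deriv φ t₀ with ha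
  set b := deriv ψ t₀ with hb
  set τ := speedTau φ ψ t₀ with hτ₀
  set κ := curv φ ψ t₀ with hκ
  set n₁ := normal1 φ ψ t₀ with hn₁
  set n₂ := normal2 φ ψ t₀ with hn₂
  have hτne : τ ≠ 0 := (hτ t₀).ne'
  have hηpos : (0:ℝ) < 1 - κ * r₀ := by
    have h := abs_lt.mp hη; linarith [h.2]
  have hηne : (1 - κ * r₀) ≠ 0 := hηpos.ne'
  set X := φ t₀ + r₀ * n₁ with hXdef
  set Y := ψ t₀ + r₀ * n₂ with hYdef
  have hp : coordMap φ ψ (r₀, t₀) = (X, Y) := rfl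
  rw [hp] at hu ⊢
  -- neighbourhood where u is C²
  obtain ⟨V, hVmem, hVu⟩ := hu.contDiffOn (le_refl 2) (by simp)
  obtain ⟨W, hWV, hWopen, hpW⟩ := mem_nhds_iff.mp hVmem
  have hWu : ContDiffOn ℝ 2 u W := hVu.mono hWV
  have hud : ∀ q ∈ W, DifferentiableAt ℝ u q := fun q hq =>
    (hWu.differentiableOn (by norm_num)).differentiableAt (hWopen.mem_nhds hq)
  set f₁ : ℝ × ℝ → ℝ := fun q => fderiv ℝ u q (1, 0) with hf₁def
  set f₂ : ℝ × ℝ → ℝ := fun q => fderiv ℝ u q (0, 1) with hf₂def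
  have hder_x : ∀ x y : ℝ, (x, y) ∈ W → HasDerivAt (fun s' => u (s', y)) (f₁ (x, y)) x := by
    intro x y hxy
    have hc : HasDerivAt (fun s' : ℝ => (s', y)) ((1:ℝ), (0:ℝ)) x :=
      HasDerivAt.prodMk (hasDerivAt_id x) (hasDerivAt_const x y)
    exact (hud _ hxy).hasFDerivAt.comp_hasDerivAt x hc
  have hder_y : ∀ x y : ℝ, (x, y) ∈ W → HasDerivAt (fun s' => u (x, s')) (f₂ (x, y)) y := by
    intro x y hxy
    have hc : HasDerivAt (fun s' : ℝ => (x, s')) ((0:ℝ), (1:ℝ)) y :=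
      HasDerivAt.prodMk (hasDerivAt_const y x) (hasDerivAt_id y)
    exact (hud _ hxy).hasFDerivAt.comp_hasDerivAt y hc
  have hcurve : ∀ (γ : ℝ → ℝ × ℝ) (s : ℝ) (v : ℝ × ℝ), HasDerivAt γ v s → γ s ∈ W →
      HasDerivAt (fun x => u (γ x)) (v.1 * f₁ (γ s) + v.2 * f₂ (γ s)) s := by
    intro γ s v hγ hγs
    have h := (hud _ hγs).hasFDerivAt.comp_hasDerivAt s hγ
    have hv : fderiv ℝ u (γ s) v = v.1 * f₁ (γ s) + v.2 * f₂ (γ s) := by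
      have := clm_eval (fderiv ℝ u (γ s)) v.1 v.2
      simpa using this
    rw [hv] at h
    exact h
  -- second-order data
  have hfd : ContDiffAt ℝ 1 (fderiv ℝ u) (X, Y) := hu.fderiv_right (by norm_num)
  have hAd : DifferentiableAt ℝ f₁ (X, Y) :=
    (hfd.clm_apply contDiffAt_const).differentiableAt one_ne_zero
  have hBd : DifferentiableAt ℝ f₂ (X, Y) :=
    (hfd.clm_apply contDiffAt_const).differentiableAt one_ne_zero
  set A := fderiv ℝ f₁ (X, Y) with hAdef
  set B := fderiv ℝ f₂ (X, Y) with hBdef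
  set H11 := A (1, 0) with hH11
  set H12 := A (0, 1) with hH12
  set H21 := B (1, 0) with hH21
  set H22 := B (0, 1) with hH22
  -- LHS
  have hXX : pderivXX u (X, Y) = H11 := by
    have hmemX : ∀ᶠ s in nhds X, (s, Y) ∈ W := by
      have hc : ContinuousAt (fun s : ℝ => (s, Y)) X := by fun_prop
      exact hc.preimage_mem_nhds (hWopen.mem_nhds hpW)
    have hev : (fun s => deriv (fun s' => u (s', Y)) s) =ᶠ[nhds X] fun s => f₁ (s, Y) := by
      filter_upwards [hmemX] with s hs
      exact (hder_x s Y hs).deriv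
    have hc : HasDerivAt (fun s : ℝ => (s, Y)) ((1:ℝ), (0:ℝ)) X :=
      HasDerivAt.prodMk (hasDerivAt_id X) (hasDerivAt_const X Y)
    have h2 : HasDerivAt (fun s : ℝ => f₁ (s, Y)) H11 X :=
      by have h := hAd.hasFDerivAt.comp_hasDerivAt X hc; exact h
    calc pderivXX u (X, Y) = deriv (fun s => deriv (fun s' => u (s', Y)) s) X := rfl
      _ = deriv (fun s : ℝ => f₁ (s, Y)) X := hev.deriv_eq
      _ = H11 := h2.deriv
  have hYY : pderivYY u (X, Y) = H22 := by
    have hmemY : ∀ᶠ s in nhds Y, (X, s) ∈ W := by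
      have hc : ContinuousAt (fun s : ℝ => (X, s)) Y := by fun_prop
      exact hc.preimage_mem_nhds (hWopen.mem_nhds hpW)
    have hev : (fun s => deriv (fun s' => u (X, s')) s) =ᶠ[nhds Y] fun s => f₂ (X, s) := by
      filter_upwards [hmemY] with s hs
      exact (hder_y X s hs).deriv
    have hc : HasDerivAt (fun s : ℝ => (X, s)) ((0:ℝ), (1:ℝ)) Y :=
      HasDerivAt.prodMk (hasDerivAt_const Y X) (hasDerivAt_id Y)
    have h2 : HasDerivAt (fun s : ℝ => f₂ (X, s)) H22 Y :=
      hBd.hasFDerivAt.comp_hasDerivAt Y hc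
    calc pderivYY u (X, Y) = deriv (fun s => deriv (fun s' => u (X, s')) s) Y := rfl
      _ = deriv (fun s : ℝ => f₂ (X, s)) Y := hev.deriv_eq
      _ = H22 := h2.deriv
  -- r-part
  set γr : ℝ → ℝ × ℝ := fun s => coordMap φ ψ (s, t₀) with hγrdef
  have hγr : ∀ s, HasDerivAt γr (n₁, n₂) s := by
    intro s
    have h1 : HasDerivAt (fun s : ℝ => φ t₀ + s * n₁) n₁ s := by
      simpa using ((hasDerivAt_id s).mul_const n₁).const_add (φ t₀)
    have h2 : HasDerivAt (fun s : ℝ => ψ t₀ + s * n₂) n₂ s := by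
      simpa using ((hasDerivAt_id s).mul_const n₂).const_add (ψ t₀)
    exact HasDerivAt.prodMk h1 h2
  have hmemr : ∀ᶠ s in nhds r₀, γr s ∈ W :=
    ((hγr r₀).continuousAt).preimage_mem_nhds (hWopen.mem_nhds hpW)
  have hevr : (fun s => (1 - κ * s) * deriv (fun s' => u (coordMap φ ψ (s', t₀))) s)
      =ᶠ[nhds r₀] fun s => (1 - κ * s) * (n₁ * f₁ (γr s) + n₂ * f₂ (γr s)) := by
    filter_upwards [hmemr] with s hs
    have hd : deriv (fun s' => u (coordMap φ ψ (s', t₀))) s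
        = n₁ * f₁ (γr s) + n₂ * f₂ (γr s) := (hcurve γr s (n₁, n₂) (hγr s) hs).deriv
    rw [hd]
  have hf1r : HasDerivAt (fun s => f₁ (γr s)) (n₁ * H11 + n₂ * H12) r₀ := by
    have h := hAd.hasFDerivAt.comp_hasDerivAt r₀ (hγr r₀)
    rw [clm_eval A n₁ n₂] at h
    exact h
  have hf2r : HasDerivAt (fun s => f₂ (γr s)) (n₁ * H21 + n₂ * H22) r₀ := by
    have h := hBd.hasFDerivAt.comp_hasDerivAt r₀ (hγr r₀)
    rw [clm_eval B n₁ n₂] at h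
    exact h
  have hη' : HasDerivAt (fun s : ℝ => 1 - κ * s) (-κ) r₀ := by
    simpa using ((hasDerivAt_id r₀).const_mul κ).const_sub 1
  have hQ : HasDerivAt (fun s => (1 - κ * s) * (n₁ * f₁ (γr s) + n₂ * f₂ (γr s)))
      ((-κ) * (n₁ * f₁ (X, Y) + n₂ * f₂ (X, Y)) +
        (1 - κ * r₀) * (n₁ * (n₁ * H11 + n₂ * H12) + n₂ * (n₁ * H21 + n₂ * H22))) r₀ :=
    hη'.mul ((hf1r.const_mul n₁).add (hf2r.const_mul n₂))
  have hRr : deriv (fun s => (1 - κ * s) * deriv (fun s' => u (coordMap φ ψ (s', t₀))) s) r₀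
      = (-κ) * (n₁ * f₁ (X, Y) + n₂ * f₂ (X, Y)) +
        (1 - κ * r₀) * (n₁ * (n₁ * H11 + n₂ * H12) + n₂ * (n₁ * H21 + n₂ * H22)) := by
    rw [hevr.deriv_eq]; exact hQ.deriv
  -- t-part
  set γt : ℝ → ℝ × ℝ := fun s => coordMap φ ψ (r₀, s) with hγtdef
  have hγt : ∀ s, HasDerivAt γt
      ((1 - curv φ ψ s * r₀) * deriv φ s, (1 - curv φ ψ s * r₀) * deriv ψ s) s := by
    intro s
    have h1 : HasDerivAt (fun s => φ s + r₀ * normal1 φ ψ s)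
        ((1 - curv φ ψ s * r₀) * deriv φ s) s := by
      have h := ((hφ.differentiable (by norm_num) s).hasDerivAt).add
        ((hasDerivAt_normal1 φ ψ hφ hψ hτ s).const_mul r₀)
      refine h.congr_deriv (Eq.symm ?_)
      ring
    have h2 : HasDerivAt (fun s => ψ s + r₀ * normal2 φ ψ s)
        ((1 - curv φ ψ s * r₀) * deriv ψ s) s := by
      have h := ((hψ.differentiable (by norm_num) s).hasDerivAt).add
        ((hasDerivAt_normal2 φ ψ hφ hψ hτ s).const_mul r₀)
      refine h.congr_deriv (Eq.symm ?_)
      ring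
    exact HasDerivAt.prodMk h1 h2
  have hmemt : ∀ᶠ s in nhds t₀, γt s ∈ W :=
    ((hγt t₀).continuousAt).preimage_mem_nhds (hWopen.mem_nhds hpW)
  have hκev : ∀ᶠ s in nhds t₀, 1 - curv φ ψ s * r₀ ≠ 0 := by
    have hc : ContinuousAt (fun s => |curv φ ψ s * r₀|) t₀ :=
      (((continuous_curv φ ψ hφ hψ hτ).continuousAt).mul continuousAt_const).abs
    have hev := hc.preimage_mem_nhds (Iio_mem_nhds hη)
    filter_upwards [hev] with s hs
    have h1 : |curv φ ψ s * r₀| < 1 := hs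
    have h2 := (abs_lt.mp h1).2
    have : (0:ℝ) < 1 - curv φ ψ s * r₀ := by linarith
    exact this.ne'
  have hevt : (fun s => zetaFn φ ψ r₀ s * deriv (fun s' => u (coordMap φ ψ (r₀, s'))) s)
      =ᶠ[nhds t₀] fun s => f₁ (γt s) * normal2 φ ψ s - f₂ (γt s) * normal1 φ ψ s := by
    filter_upwards [hmemt, hκev] with s hs hκs
    have hd : deriv (fun s' => u (coordMap φ ψ (r₀, s'))) s
        = ((1 - curv φ ψ s * r₀) * deriv φ s) * f₁ (γt s)
          + ((1 - curv φ ψ s * r₀) * deriv ψ s) * f₂ (γt s) :=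
      (hcurve γt s _ (hγt s) hs).deriv
    rw [hd]
    have hτs : speedTau φ ψ s ≠ 0 := (hτ s).ne'
    unfold zetaFn normal1 normal2
    field_simp
    ring
  have hf1t : HasDerivAt (fun s => f₁ (γt s))
      (((1 - κ * r₀) * a) * H11 + ((1 - κ * r₀) * b) * H12) t₀ := by
    have h := hAd.hasFDerivAt.comp_hasDerivAt t₀ (hγt t₀)
    rw [clm_eval A ((1 - κ * r₀) * a) ((1 - κ * r₀) * b)] at h
    exact h
  have hf2t : HasDerivAt (fun s => f₂ (γt s))
      (((1 - κ * r₀) * a) * H21 + ((1 - κ * r₀) * b) * H22) t₀ := by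
    have h := hBd.hasFDerivAt.comp_hasDerivAt t₀ (hγt t₀)
    rw [clm_eval B ((1 - κ * r₀) * a) ((1 - κ * r₀) * b)] at h
    exact h
  have hP : HasDerivAt (fun s => f₁ (γt s) * normal2 φ ψ s - f₂ (γt s) * normal1 φ ψ s)
      (((((1 - κ * r₀) * a) * H11 + ((1 - κ * r₀) * b) * H12) * n₂ + f₁ (X, Y) * (-κ * b)) -
       ((((1 - κ * r₀) * a) * H21 + ((1 - κ * r₀) * b) * H22) * n₁ + f₂ (X, Y) * (-κ * a))) t₀ :=
    (hf1t.mul (hasDerivAt_normal2 φ ψ hφ hψ hτ t₀)).sub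
      (hf2t.mul (hasDerivAt_normal1 φ ψ hφ hψ hτ t₀))
  have hRt : deriv (fun s => zetaFn φ ψ r₀ s * deriv (fun s' => u (coordMap φ ψ (r₀, s'))) s) t₀
      = ((((1 - κ * r₀) * a) * H11 + ((1 - κ * r₀) * b) * H12) * n₂ + f₁ (X, Y) * (-κ * b)) -
        ((((1 - κ * r₀) * a) * H21 + ((1 - κ * r₀) * b) * H22) * n₁ + f₂ (X, Y) * (-κ * a)) := by
    rw [hevt.deriv_eq]; exact hP.deriv
  -- conclusion
  rw [hXX, hYY, hRr, hRt]
  have h2 : τ ^ 2 = a ^ 2 + b ^ 2 := tau_sq φ ψ t₀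
  have hzv : zetaFn φ ψ r₀ t₀ = 1 / (τ * (1 - κ * r₀)) := rfl
  have hn1v : n₁ = -b / τ := rfl
  have hn2v : n₂ = a / τ := rfl
  rw [hzv, hn1v, hn2v]
  field_simp
  linear_combination ((H11+H22) * (1-κ*r₀)) * h2
end
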